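/- arXiv:1611.07275 — 6 statements merged into one kernel-verified Lean document; each statement's English description precedes it below -/
import Mathlib

section
/- The probability that ρ_n equals the identity permutation of {1,…,n} is 2^n/(n+1)!. -/
open MeasureTheory ProbabilityTheory Filter
open scoped ENNReal NNReal Topology

/-- The hypotheses defining an inverse-unfair permutation `ρ` on a probability
space `(Ω, μ)`: `Z i` is (distributed as) the maximum of `i+1` i.i.d. uniform
random variables on `(0,1)` (players are indexed by `Fin n`, player `i : Fin n`
drawing `(i : ℕ) + 1` numbers), the `Z i` are independent, and almost surely
`ρ ω` is the rank permutation of `(Z 0 ω, …, Z (n-1) ω)`. -/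
structure IsInverseUnfair {n : ℕ} {Ω : Type*} [MeasurableSpace Ω]
    (μ : Measure Ω) (Z : Fin n → Ω → ℝ) (ρ : Ω → Equiv.Perm (Fin n)) : Prop where
  prob : IsProbabilityMeasure μ
  meas : ∀ i, Measurable (Z i)
  indep : iIndepFun Z μ
  cdf : ∀ i : Fin n, ∀ t ∈ Set.Icc (0 : ℝ) 1,
      μ {ω | Z i ω ≤ t} = ENNReal.ofReal (t ^ ((i : ℕ) + 1))
  rhoMeas : ∀ σ : Equiv.Perm (Fin n), MeasurableSet {ω | ρ ω = σ}
  rank : ∀ᵐ ω ∂μ, ∀ i j : Fin n, (ρ ω i < ρ ω j ↔ Z i ω < Z j ω)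

namespace Stmt2Aux

/-- The law of `Z i` (for `i : ℕ` zero-based): density `(i+1) t ^ i` on `(0,1]`. -/
noncomputable def nu (i : ℕ) : Measure ℝ :=
  (volume.restrict (Set.Ioc (0:ℝ) 1)).withDensity fun t => ENNReal.ofReal ((i + 1 : ℝ) * t ^ i)

lemma nu_apply {i : ℕ} {A : Set ℝ} (hA : MeasurableSet A) :
    nu i A = ∫⁻ t in A ∩ Set.Ioc (0:ℝ) 1, ENNReal.ofReal ((i + 1 : ℝ) * t ^ i) := by
  rw [nu, withDensity_apply _ hA, Measure.restrict_restrict hA]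

lemma nu_null {i : ℕ} {A : Set ℝ} (hA : MeasurableSet A)
    (h : volume (A ∩ Set.Ioc (0:ℝ) 1) = 0) : nu i A = 0 := by
  rw [nu_apply hA]
  exact setLIntegral_measure_zero _ _ h

/-- monomial integral. -/
lemma lint_pow (m : ℕ) {t : ℝ} (ht : 0 ≤ t) :
    ∫⁻ s in Set.Ioc (0:ℝ) t, ENNReal.ofReal (s ^ m)
      = ENNReal.ofReal (t ^ (m + 1) / (m + 1)) := by
  rw [← ofReal_integral_eq_lintegral_ofReal]
  · rw [← intervalIntegral.integral_of_le ht, integral_pow]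
    norm_num
  · exact (continuous_pow m).integrableOn_Ioc
  · exact ae_restrict_of_forall_mem measurableSet_Ioc fun s hs => pow_nonneg hs.1.le m

lemma Iic_inter_Ioc {t : ℝ} (h0 : 0 ≤ t) (h1 : t ≤ 1) :
    Set.Iic t ∩ Set.Ioc (0:ℝ) 1 = Set.Ioc 0 t := by
  ext s
  constructor
  · rintro ⟨hs, hs0, _⟩; exact ⟨hs0, hs⟩
  · rintro ⟨hs0, hs⟩; exact ⟨hs, hs0, hs.trans h1⟩

lemma nu_Iic {i : ℕ} {t : ℝ} (h0 : 0 ≤ t) (h1 : t ≤ 1) :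
    nu i (Set.Iic t) = ENNReal.ofReal (t ^ (i + 1)) := by
  rw [nu_apply measurableSet_Iic, Iic_inter_Ioc h0 h1]
  have hmul : ∀ s : ℝ, ENNReal.ofReal ((i + 1 : ℝ) * s ^ i)
      = ENNReal.ofReal (i + 1 : ℝ) * ENNReal.ofReal (s ^ i) := fun s =>
    ENNReal.ofReal_mul (by positivity)
  simp only [hmul]
  rw [lintegral_const_mul _ (by fun_prop : Measurable fun s : ℝ => ENNReal.ofReal (s ^ i)),
    lint_pow i h0,
    ← ENNReal.ofReal_mul (by positivity)]
  congr 1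
  field_simp

instance nu_prob (i : ℕ) : IsProbabilityMeasure (nu i) := by
  constructor
  have : (Set.univ : Set ℝ) ∩ Set.Ioc (0:ℝ) 1 = Set.Iic 1 ∩ Set.Ioc (0:ℝ) 1 := by
    rw [Set.univ_inter, Iic_inter_Ioc zero_le_one le_rfl]
  rw [nu_apply MeasurableSet.univ, this, ← nu_apply measurableSet_Iic,
    nu_Iic zero_le_one le_rfl]
  simp

/-- chain condition. -/
def chain (k : ℕ) (x : Fin k → ℝ) : Prop := ∀ i j : Fin k, i < j → x i < x j

lemma measurableSet_chain (k : ℕ) : MeasurableSet {x : Fin k → ℝ | chain k x} := by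
  have : {x : Fin k → ℝ | chain k x} = ⋂ i, ⋂ j, {x : Fin k → ℝ | i < j → x i < x j} := by
    ext x; simp [chain, Set.mem_iInter]
  rw [this]
  refine MeasurableSet.iInter fun i => MeasurableSet.iInter fun j => ?_
  by_cases hij : i < j
  · simpa [hij] using measurableSet_lt (measurable_pi_apply i) (measurable_pi_apply j)
  · simp [hij]

def cSet (k : ℕ) (t : ℝ) : Set (Fin k → ℝ) := {x | chain k x ∧ ∀ i, x i ≤ t}

def sSet (k : ℕ) (t : ℝ) : Set (Fin k → ℝ) := {x | chain k x ∧ ∀ i, x i < t}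

lemma measurableSet_cSet (k : ℕ) (t : ℝ) : MeasurableSet (cSet k t) := by
  have : cSet k t = {x | chain k x} ∩ ⋂ i, {x : Fin k → ℝ | x i ≤ t} := by
    ext x; simp [cSet, Set.mem_iInter]
  rw [this]
  exact (measurableSet_chain k).inter <| MeasurableSet.iInter fun i =>
    measurableSet_le (measurable_pi_apply i) measurable_const

lemma measure_eq_of_subset_union {α : Type*} [MeasurableSpace α] (μ : Measure α)
    {A B N : Set α} (hAB : A ⊆ B) (hBN : B ⊆ A ∪ N) (hN : μ N = 0) : μ B = μ A :=
  le_antisymm ((measure_mono hBN).trans ((measure_union_le A N).trans (by simp [hN])))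
    (measure_mono hAB)

lemma pi_eval_null {m : ℕ} (i : Fin m) {A : Set ℝ} (hA : MeasurableSet A)
    (h0 : nu i A = 0) :
    Measure.pi (fun j : Fin m => nu j) {x | x i ∈ A} = 0 := by
  have hset : {x : Fin m → ℝ | x i ∈ A}
      = Set.pi Set.univ (Function.update (fun _ : Fin m => (Set.univ : Set ℝ)) i A) := by
    ext x
    simp only [Set.mem_setOf_eq, Set.mem_univ_pi, Function.update_apply]
    constructor
    · intro hx j
      by_cases hj : j = i
      · subst hj; simp [hx]
      · simp [hj]
    · intro hx
      have := hx i
      simpa using this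
  rw [hset, Measure.pi_pi]
  exact Finset.prod_eq_zero (Finset.mem_univ i) (by simp [h0])

lemma pi_sSet_eq_cSet (k : ℕ) (s : ℝ) :
    Measure.pi (fun j : Fin k => nu j) (cSet k s)
      = Measure.pi (fun j : Fin k => nu j) (sSet k s) := by
  refine measure_eq_of_subset_union _ (fun x hx => ⟨hx.1, fun i => (hx.2 i).le⟩)
    (fun x hx => ?_) (measure_iUnion_null fun i : Fin k =>
      pi_eval_null i (measurableSet_singleton s) (nu_null (measurableSet_singleton s)
        (measure_mono_null Set.inter_subset_left (measure_singleton s))))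
  · by_cases hmem : x ∈ ⋃ i : Fin k, {y : Fin k → ℝ | y i ∈ ({s} : Set ℝ)}
    · exact Or.inr hmem
    · left
      refine ⟨hx.1, fun i => lt_of_le_of_ne (hx.2 i) ?_⟩
      intro hxi
      exact hmem (Set.mem_iUnion.2 ⟨i, hxi⟩)

/-- the exponent sequence. -/
def E : ℕ → ℕ
  | 0 => 0
  | k + 1 => E k + (k + 1)

lemma E_eq (k : ℕ) : 2 * E k = k * (k + 1) := by
  induction k with
  | zero => simp [E]
  | succ k ih => simp only [E]; ring_nf; ring_nf at ih; omega

/-- Key computation: probability that the first `k` coordinates form an increasing chain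
bounded by `t`. -/
lemma key : ∀ (k : ℕ), ∀ t : ℝ, 0 ≤ t → t ≤ 1 →
    Measure.pi (fun i : Fin k => nu i) (cSet k t)
      = ENNReal.ofReal ((2:ℝ) ^ k / (Nat.factorial (k+1)) * t ^ (E k)) := by
  intro k
  induction k with
  | zero =>
    intro t h0 h1
    have : cSet 0 t = Set.univ := by
      ext x; simp [cSet, chain]
    rw [this]
    simp [E, Nat.factorial]
  | succ k ih =>
    intro t h0 h1
    classical
    -- split off the last coordinate
    have hmp := measurePreserving_piFinSuccAbove (fun i : Fin (k+1) => nu i) (Fin.last k)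
    simp only [Fin.succAbove_last, Fin.coe_castSucc, Fin.val_last] at hmp
    set T : Set (ℝ × (Fin k → ℝ)) :=
      {p | p.1 ≤ t ∧ chain k p.2 ∧ ∀ i, p.2 i < p.1} with hT
    have hTmeas : MeasurableSet T := by
      have : T = {p : ℝ × (Fin k → ℝ) | p.1 ≤ t}
          ∩ ({p : ℝ × (Fin k → ℝ) | chain k p.2}
            ∩ ⋂ i, {p : ℝ × (Fin k → ℝ) | p.2 i < p.1}) := by
        ext p; simp [hT, Set.mem_iInter, and_assoc]
      rw [this]
      refine (measurableSet_le measurable_fst measurable_const).inter ?_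
      refine MeasurableSet.inter ((measurableSet_chain k).preimage measurable_snd) ?_
      exact MeasurableSet.iInter fun i =>
        measurableSet_lt (by fun_prop) measurable_fst
    have hpre : (MeasurableEquiv.piFinSuccAbove (fun _ : Fin (k+1) => ℝ) (Fin.last k)) ⁻¹' T
        = cSet (k+1) t := by
      ext x
      have happ : (MeasurableEquiv.piFinSuccAbove (fun _ : Fin (k+1) => ℝ) (Fin.last k)) x
          = (x (Fin.last k), fun j : Fin k => x j.castSucc) := by
        show ((Fin.insertNthEquiv (fun _ : Fin (k+1) => ℝ) (Fin.last k)).symm x)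
            = (x (Fin.last k), fun j : Fin k => x j.castSucc)
        rw [Fin.insertNthEquiv_symm_apply]
        refine Prod.ext rfl ?_
        funext j
        simp [Fin.removeNth, Fin.succAbove_last]
      rw [Set.mem_preimage, happ]
      show (x (Fin.last k) ≤ t ∧ chain k (fun j : Fin k => x j.castSucc)
          ∧ ∀ i : Fin k, x i.castSucc < x (Fin.last k)) ↔ _
      constructor
      · rintro ⟨hlt, hch, hb⟩
        refine ⟨?_, ?_⟩
        · intro i j hij
          rcases Fin.eq_castSucc_or_eq_last j with ⟨j', rfl⟩ | rfl
          · rcases Fin.eq_castSucc_or_eq_last i with ⟨i', rfl⟩ | rfl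
            · exact hch i' j' (by simpa using hij)
            · exact absurd ((Fin.castSucc_lt_last j').trans hij) (lt_irrefl _)
          · rcases Fin.eq_castSucc_or_eq_last i with ⟨i', rfl⟩ | rfl
            · exact hb i'
            · exact absurd hij (lt_irrefl _)
        · intro i
          rcases Fin.eq_castSucc_or_eq_last i with ⟨i', rfl⟩ | rfl
          · exact (hb i').le.trans hlt
          · exact hlt
      · rintro ⟨hch, hb⟩
        exact ⟨hb _, fun i j hij => hch _ _ (by simpa using hij),
          fun i => hch _ _ (Fin.castSucc_lt_last i)⟩
    have hsplit : Measure.pi (fun i : Fin (k+1) => nu i) (cSet (k+1) t)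
        = ((nu k).prod (Measure.pi fun j : Fin k => nu j)) T := by
      rw [← hpre]
      exact hmp.measure_preimage hTmeas.nullMeasurableSet
    rw [hsplit, Measure.prod_apply hTmeas]
    have hslice : ∀ s : ℝ, (Prod.mk s ⁻¹' T)
        = if s ≤ t then sSet k s else (∅ : Set (Fin k → ℝ)) := by
      intro s
      ext y
      by_cases hs : s ≤ t <;> simp [hT, sSet, hs]
    have hint : (fun s => (Measure.pi fun j : Fin k => nu j) (Prod.mk s ⁻¹' T))
        = Set.indicator (Set.Iic t)
            (fun s => (Measure.pi fun j : Fin k => nu j) (sSet k s)) := by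
      funext s
      by_cases hs : s ≤ t
      · rw [hslice s, if_pos hs]
        exact (Set.indicator_of_mem (Set.mem_Iic.mpr hs)
          (fun s => (Measure.pi fun j : Fin k => nu j) (sSet k s))).symm
      · rw [hslice s, if_neg hs]
        rw [Set.indicator_of_notMem (by simpa using hs)]
        simp
    have hind : ∫⁻ s, (Measure.pi fun j : Fin k => nu j) (Prod.mk s ⁻¹' T) ∂(nu k)
        = ∫⁻ s in Set.Iic t, (Measure.pi fun j : Fin k => nu j) (sSet k s) ∂(nu k) := by
      rw [← lintegral_indicator measurableSet_Iic]
      exact lintegral_congr fun s => congrFun hint s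
    rw [hind]
    have hg : Measurable fun s : ℝ => (Measure.pi fun j : Fin k => nu j) (sSet k s) := by
      apply Monotone.measurable
      intro a b hab
      exact measure_mono fun y hy => ⟨hy.1, fun i => lt_of_lt_of_le (hy.2 i) hab⟩
    have hf : Measurable fun s : ℝ => ENNReal.ofReal ((k + 1 : ℝ) * s ^ k) := by fun_prop
    rw [nu, setLIntegral_withDensity_eq_setLIntegral_mul _ hf hg measurableSet_Iic,
      Measure.restrict_restrict measurableSet_Iic, Iic_inter_Ioc h0 h1]
    have hcongr : ∀ s ∈ Set.Ioc (0:ℝ) t,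
        ((fun s : ℝ => ENNReal.ofReal ((k + 1 : ℝ) * s ^ k))
          * fun s : ℝ => (Measure.pi fun j : Fin k => nu j) (sSet k s)) s
        = ENNReal.ofReal ((k + 1 : ℝ) * ((2:ℝ) ^ k / (Nat.factorial (k+1))))
            * ENNReal.ofReal (s ^ (E k + k)) := by
      intro s hs
      have hs0 : 0 ≤ s := hs.1.le
      have hs1 : s ≤ 1 := hs.2.trans h1
      have hP0 : 0 ≤ (2:ℝ) ^ k / (Nat.factorial (k+1)) := by positivity
      simp only [Pi.mul_apply]
      rw [← pi_sSet_eq_cSet k s, ih s hs0 hs1,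
        ← ENNReal.ofReal_mul (by positivity), ← ENNReal.ofReal_mul (by positivity)]
      congr 1
      rw [pow_add]
      ring
    rw [setLIntegral_congr_fun measurableSet_Ioc hcongr,
      lintegral_const_mul _
        (by fun_prop : Measurable fun s : ℝ => ENNReal.ofReal (s ^ (E k + k))),
      lint_pow _ h0, ← ENNReal.ofReal_mul (by positivity)]
    congr 1
    have hE := E_eq k
    have hEueq : E (k + 1) = E k + k + 1 := by simp [E]; omega
    rw [hEueq]
    have hfact : (Nat.factorial (k + 1 + 1) : ℝ) = (k + 2) * Nat.factorial (k + 1) := by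
      rw [Nat.factorial_succ]; push_cast; ring
    have hER : (2:ℝ) * (E k : ℝ) = (k : ℝ) * (k + 1) := by exact_mod_cast hE
    have hden : ((E k + k : ℕ) : ℝ) + 1 = ((k:ℝ) + 1) * ((k:ℝ) + 2) / 2 := by
      push_cast
      ring_nf
      ring_nf at hER
      linarith
    have hfne : (Nat.factorial (k + 1) : ℝ) ≠ 0 := by positivity
    have h2 : ((k:ℝ) + 1) ≠ 0 := by positivity
    have h3 : ((k:ℝ) + 2) ≠ 0 := by positivity
    rw [hfact, hden]
    field_simp
    ring

end Stmt2Aux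

open Stmt2Aux in
/-- The probability that the inverse-unfair permutation `ρ_n` is the identity
permutation equals `2^n / (n+1)!`. -/
theorem stmt_2 {n : ℕ} (hn : 1 ≤ n) {Ω : Type*} [MeasurableSpace Ω]
    (μ : Measure Ω) (Z : Fin n → Ω → ℝ) (ρ : Ω → Equiv.Perm (Fin n))
    (h : IsInverseUnfair μ Z ρ) :
    μ {ω | ρ ω = 1}
      = ENNReal.ofReal ((2 : ℝ) ^ n / (Nat.factorial (n + 1) : ℝ)) := by
  haveI := h.prob
  have hZ := h.meas
  -- Step 1: a.e., `ρ ω = 1` iff the `Z i ω` form a chain.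
  have hae : {ω | ρ ω = 1} =ᵐ[μ] {ω | chain n fun i => Z i ω} := by
    rw [Filter.eventuallyEq_set]
    filter_upwards [h.rank] with ω hω
    constructor
    · intro h1 i j hij
      refine (hω i j).1 ?_
      simp [h1, hij]
    · intro hc
      have hsm : StrictMono (ρ ω) := fun i j hij => (hω i j).2 (hc i j hij)
      have hr : Set.range (ρ ω) = Set.range (id : Fin n → Fin n) := by
        simp [Set.range_id, Set.range_eq_univ.2 (ρ ω).surjective]
      haveI hwf : WellFoundedLT (Fin n) := inferInstance
      have hid : (ρ ω : Fin n → Fin n) = id :=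
        (@StrictMono.range_inj (Fin n) (Fin n) inferInstance inferInstance hwf _ id
          hsm strictMono_id).1 hr
      exact Equiv.ext fun i => by simpa using congrFun hid i
  -- Step 2: marginals.
  have hmap : ∀ i : Fin n, Measure.map (Z i) μ = nu i := by
    intro i
    haveI : IsProbabilityMeasure (Measure.map (Z i) μ) :=
      Measure.isProbabilityMeasure_map (hZ i).aemeasurable
    refine Measure.ext_of_Iic _ _ fun t => ?_
    rw [Measure.map_apply (hZ i) measurableSet_Iic]
    have hpre : Z i ⁻¹' Set.Iic t = {ω | Z i ω ≤ t} := rfl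
    rcases lt_or_ge t 0 with h0 | h0
    · have hL : μ (Z i ⁻¹' Set.Iic t) = 0 := by
        refine le_antisymm ?_ (zero_le (a := _))
        calc μ (Z i ⁻¹' Set.Iic t) ≤ μ {ω | Z i ω ≤ 0} :=
              measure_mono fun ω hω => le_trans hω h0.le
          _ = 0 := by rw [h.cdf i 0 ⟨le_rfl, zero_le_one⟩]; simp
      rw [hL]
      symm
      refine nu_null measurableSet_Iic ?_
      have : Set.Iic t ∩ Set.Ioc (0:ℝ) 1 = ∅ := by
        ext s; simp only [Set.mem_inter_iff, Set.mem_Iic, Set.mem_Ioc, Set.mem_empty_iff_false,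
          iff_false]
        rintro ⟨hs, hs0, _⟩; linarith
      rw [this]; simp
    · rcases le_or_gt t 1 with h1 | h1
      · rw [hpre, h.cdf i t ⟨h0, h1⟩, nu_Iic h0 h1]
      · have hL : μ (Z i ⁻¹' Set.Iic t) = 1 := by
          refine le_antisymm prob_le_one ?_
          calc (1:ℝ≥0∞) = μ {ω | Z i ω ≤ 1} := by
                rw [h.cdf i 1 ⟨zero_le_one, le_rfl⟩]; simp
            _ ≤ μ (Z i ⁻¹' Set.Iic t) := measure_mono fun ω hω => le_trans hω h1.le
        have hR : nu i (Set.Iic t) = 1 := by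
          refine le_antisymm prob_le_one ?_
          calc (1:ℝ≥0∞) = nu i (Set.Iic 1) := by rw [nu_Iic zero_le_one le_rfl]; simp
            _ ≤ nu i (Set.Iic t) := measure_mono (Set.Iic_subset_Iic.2 h1.le)
        rw [hL, hR]
  -- Step 3: joint law is the product measure.
  set Zv : Ω → (Fin n → ℝ) := fun ω i => Z i ω with hZv_def
  have hZv : Measurable Zv := measurable_pi_lambda _ hZ
  have hjoint : Measure.map Zv μ = Measure.pi (fun i : Fin n => nu i) := by
    refine (Measure.pi_eq fun s hs => ?_).symm
    rw [Measure.map_apply hZv (MeasurableSet.univ_pi hs)]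
    have hpre : Zv ⁻¹' Set.pi Set.univ s = ⋂ i, Z i ⁻¹' s i := by
      ext ω; simp [Zv, Set.mem_univ_pi]
    rw [hpre]
    have hbi : (⋂ i ∈ (Finset.univ : Finset (Fin n)), Z i ⁻¹' s i) = ⋂ i, Z i ⁻¹' s i := by
      simp
    have hpi := h.indep.measure_inter_preimage_eq_mul (S := Finset.univ)
      (sets := s) (fun i _ => hs i)
    rw [hbi] at hpi
    rw [hpi]
    refine Finset.prod_congr rfl fun i _ => ?_
    rw [← hmap i, Measure.map_apply (hZ i) (hs i)]
  -- Step 4: assemble.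
  have hmeq : μ {ω | ρ ω = 1} = μ {ω | chain n fun i => Z i ω} := measure_congr hae
  have hch : {ω | chain n fun i => Z i ω} = Zv ⁻¹' {x | chain n x} := rfl
  rw [hmeq, hch, ← Measure.map_apply hZv (measurableSet_chain n), hjoint]
  have hfull : Measure.pi (fun i : Fin n => nu i) {x | chain n x}
      = Measure.pi (fun i : Fin n => nu i) (cSet n 1) := by
    have hIoi : volume (Set.Ioi (1:ℝ) ∩ Set.Ioc (0:ℝ) 1) = 0 := by
      have : Set.Ioi (1:ℝ) ∩ Set.Ioc (0:ℝ) 1 = ∅ := by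
        ext s; simp only [Set.mem_inter_iff, Set.mem_Ioi, Set.mem_Ioc, Set.mem_empty_iff_false,
          iff_false]
        rintro ⟨hs, _, hs1⟩; linarith
      rw [this]; simp
    refine measure_eq_of_subset_union _
      (N := ⋃ i : Fin n, {y : Fin n → ℝ | y i ∈ Set.Ioi (1:ℝ)})
      (fun x hx => hx.1) (fun x hx => ?_)
      (measure_iUnion_null fun i : Fin n =>
        pi_eval_null i measurableSet_Ioi (nu_null measurableSet_Ioi hIoi))
    by_cases hmem : x ∈ ⋃ i : Fin n, {y : Fin n → ℝ | y i ∈ Set.Ioi (1:ℝ)}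
    · exact Or.inr hmem
    · left
      refine ⟨hx, fun i => ?_⟩
      by_contra hgt
      exact hmem (Set.mem_iUnion.2 ⟨i, lt_of_not_ge hgt⟩)
  rw [hfull, key n 1 zero_le_one le_rfl]
  simp
end

section
/- Let w_0 ∈ S_n be the reversal permutation w_0(i) = n+1−i. Then the probability that ρ_n = w_0 equals 2^n · n!/(2n)!, and likewise the probability that γ_n = w_0 equals 2^n · n!/(2n)!. -/
open MeasureTheory ProbabilityTheory Filter
open scoped ENNReal NNReal Topology

open Set

noncomputable def mA (a : ℕ) : Measure ℝ :=
  (volume.restrict (Set.Ioc (0:ℝ) 1)).withDensity fun x => ENNReal.ofReal ((a+1) * x^a)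

lemma lint_pow (c : ℝ) (hc : 0 ≤ c) (b : ℕ) (u : ℝ) (hu : 0 ≤ u) :
    ∫⁻ x in Set.Ioc 0 u, ENNReal.ofReal (c * x^b) = ENNReal.ofReal (c * u^(b+1) / (b+1)) := by
  rw [← ofReal_integral_eq_lintegral_ofReal]
  · rw [← intervalIntegral.integral_of_le hu, intervalIntegral.integral_const_mul,
      integral_pow]
    norm_num
    ring_nf
  · exact Integrable.const_mul (intervalIntegral.intervalIntegrable_pow b).1 c
  · filter_upwards [ae_restrict_mem measurableSet_Ioc] with x hx
    exact mul_nonneg hc (pow_nonneg hx.1.le _)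

lemma mA_meas (a : ℕ) : Measurable fun x : ℝ => ENNReal.ofReal ((a+1) * x^a) := by
  exact (measurable_const.mul ((measurable_id (α := ℝ)).pow_const a)).ennreal_ofReal

lemma mA_apply (a : ℕ) {s : Set ℝ} (hs : MeasurableSet s) :
    mA a s = ∫⁻ x in s ∩ Set.Ioc 0 1, ENNReal.ofReal ((a+1) * x^a) := by
  rw [mA, withDensity_apply _ hs, Measure.restrict_restrict hs]

lemma mA_Ioc (a : ℕ) {u : ℝ} (h0 : 0 ≤ u) (h1 : u ≤ 1) :
    mA a (Set.Iic u) = ENNReal.ofReal (u ^ (a+1)) := by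
  rw [mA_apply a measurableSet_Iic]
  have : Set.Iic u ∩ Set.Ioc (0:ℝ) 1 = Set.Ioc 0 u := by
    ext x; simp only [Set.mem_inter_iff, Set.mem_Iic, Set.mem_Ioc]
    constructor
    · rintro ⟨h, h2, h3⟩; exact ⟨h2, h⟩
    · rintro ⟨h2, h3⟩; exact ⟨h3, h2, h3.trans h1⟩
  rw [this, lint_pow _ (by positivity) _ _ h0]
  congr 1
  field_simp

instance mA_prob (a : ℕ) : IsProbabilityMeasure (mA a) := by
  constructor
  rw [mA_apply a MeasurableSet.univ, Set.univ_inter,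
    lint_pow _ (by positivity) _ _ (by norm_num : (0:ℝ) ≤ 1)]
  rw [one_pow, mul_one, div_self (by positivity : ((a:ℝ)+1) ≠ 0), ENNReal.ofReal_one]

instance mA_noAtoms (a : ℕ) : NullSingletonClass (mA a) := by
  constructor
  intro x
  rw [mA_apply a (measurableSet_singleton x)]
  apply setLIntegral_measure_zero
  exact measure_mono_null Set.inter_subset_left (measure_singleton x)

def Esum : ℕ → ℕ → ℕ
  | 0, _ => 0
  | (k+1), s => (s+1) + Esum k (s+1)

noncomputable def Cc : ℕ → ℕ → ℝ
  | 0, _ => 1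
  | (k+1), s => ((s:ℝ)+1)/(Esum (k+1) s) * Cc k (s+1)

lemma Esum_eq (k s : ℕ) : 2 * Esum k s = k * (k + 2*s + 1) := by
  induction k generalizing s with
  | zero => simp [Esum]
  | succ k ih =>
    simp only [Esum]
    rw [Nat.mul_add, ih (s+1)]
    ring

lemma Esum_pos (k s : ℕ) (hk : 0 < k) : 0 < Esum k s := by
  have := Esum_eq k s
  nlinarith

lemma Cc_closed (k s : ℕ) :
    Cc k s = 2^k * (Nat.factorial (s+k) : ℝ) * (Nat.factorial (k+2*s) : ℝ)
      / ((Nat.factorial s : ℝ) * (Nat.factorial k : ℝ) * (Nat.factorial (2*k+2*s) : ℝ)) := by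
  induction k generalizing s with
  | zero =>
    have hs : (Nat.factorial s : ℝ) ≠ 0 := Nat.cast_ne_zero.2 (Nat.factorial_ne_zero s)
    have h2s : (Nat.factorial (2*s) : ℝ) ≠ 0 := Nat.cast_ne_zero.2 (Nat.factorial_ne_zero _)
    simp only [Cc, pow_zero, Nat.add_zero, Nat.zero_add, Nat.mul_zero, Nat.factorial_zero]
    field_simp
    norm_num
  | succ k ih =>
    have hE : ((Esum (k+1) s : ℝ)) = (k+1) * (k + 2*s + 2) / 2 := by
      have h2 := Esum_eq (k+1) s
      have : ((2 * Esum (k+1) s : ℕ) : ℝ) = (((k+1) * ((k+1) + 2*s + 1) : ℕ) : ℝ) := by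
        rw [h2]
      push_cast at this
      linarith
    rw [Cc, ih (s+1), hE]
    have e1 : s + 1 + k = s + (k+1) := by ring
    have e2 : k + 2*(s+1) = k + 2*s + 2 := by ring
    have e3 : 2*k + 2*(s+1) = 2*(k+1) + 2*s := by ring
    rw [e1, e2, e3]
    have f1 : (Nat.factorial (s+(k+1)) : ℝ) = (Nat.factorial (s+(k+1))) := rfl
    -- rewrite factorial successors
    have g1 : (Nat.factorial (s+1) : ℝ) = (s+1) * Nat.factorial s := by
      rw [Nat.factorial_succ]; push_cast; ring
    have g2 : (Nat.factorial (k+1) : ℝ) = (k+1) * Nat.factorial k := by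
      rw [Nat.factorial_succ]; push_cast; ring
    have g3 : (Nat.factorial (k+2*s+2) : ℝ) = (k+2*s+2) * Nat.factorial (k+2*s+1) := by
      rw [show k+2*s+2 = (k+2*s+1)+1 by ring, Nat.factorial_succ]; push_cast; ring
    have e4 : (k+1) + 2*s = k + 2*s + 1 := by ring
    rw [g1, g3, e4]
    have hk : (Nat.factorial k : ℝ) ≠ 0 := Nat.cast_ne_zero.2 (Nat.factorial_ne_zero k)
    have hs : (Nat.factorial s : ℝ) ≠ 0 := Nat.cast_ne_zero.2 (Nat.factorial_ne_zero s)
    have h2f : (Nat.factorial (2*(k+1)+2*s) : ℝ) ≠ 0 := Nat.cast_ne_zero.2 (Nat.factorial_ne_zero _)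
    have hks : (Nat.factorial (k+2*s+1) : ℝ) ≠ 0 := Nat.cast_ne_zero.2 (Nat.factorial_ne_zero _)
    have hkk : ((k:ℝ)+1) ≠ 0 := by positivity
    have hss : ((s:ℝ)+1) ≠ 0 := by positivity
    have hkd : ((k:ℝ) + 2*s + 2) ≠ 0 := by positivity
    rw [g2]
    field_simp
    ring

lemma Cc_nonneg (k s : ℕ) : 0 ≤ Cc k s := by
  induction k generalizing s with
  | zero => simp [Cc]
  | succ k ih => exact mul_nonneg (div_nonneg (by positivity) (by positivity)) (ih (s+1))

lemma Iic_inter_Ioc {u : ℝ} (h1 : u ≤ 1) : Set.Iic u ∩ Set.Ioc (0:ℝ) 1 = Set.Ioc 0 u := by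
  ext x; simp only [Set.mem_inter_iff, Set.mem_Iic, Set.mem_Ioc]
  constructor
  · rintro ⟨h, h2, h3⟩; exact ⟨h2, h⟩
  · rintro ⟨h2, h3⟩; exact ⟨h3, h2, h3.trans h1⟩

lemma chain_meas (k : ℕ) : MeasurableSet {x : Fin k → ℝ | ∀ i j : Fin k, i < j → x j < x i} := by
  have : {x : Fin k → ℝ | ∀ i j : Fin k, i < j → x j < x i}
      = ⋂ i, ⋂ j, {x : Fin k → ℝ | i < j → x j < x i} := by
    ext x; simp
  rw [this]
  refine MeasurableSet.iInter fun i => MeasurableSet.iInter fun j => ?_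
  by_cases h : i < j
  · simp only [h, true_implies]
    exact measurableSet_lt (measurable_pi_apply j) (measurable_pi_apply i)
  · simp only [h, false_implies, Set.setOf_true]
    exact MeasurableSet.univ

lemma chainSet_meas (k : ℕ) (t : ℝ) :
    MeasurableSet {x : Fin k → ℝ | (∀ i j : Fin k, i < j → x j < x i) ∧ ∀ i, x i ≤ t} := by
  refine (chain_meas k).inter ?_
  show MeasurableSet {x : Fin k → ℝ | ∀ i, x i ≤ t}
  have : {x : Fin k → ℝ | ∀ i, x i ≤ t} = ⋂ i, {x : Fin k → ℝ | x i ≤ t} := by ext x; simp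
  rw [this]
  exact MeasurableSet.iInter fun i => measurableSet_le (measurable_pi_apply i) measurable_const

lemma B_meas (k : ℕ) (t : ℝ) :
    MeasurableSet {p : ℝ × (Fin k → ℝ) |
      (p.1 ≤ t ∧ ∀ i j : Fin k, i < j → p.2 j < p.2 i) ∧ ∀ j, p.2 j < p.1} := by
  refine MeasurableSet.inter (MeasurableSet.inter ?_ ?_) ?_
  · exact measurableSet_le measurable_fst measurable_const
  · exact (chain_meas k).preimage measurable_snd
  · show MeasurableSet {p : ℝ × (Fin k → ℝ) | ∀ j, p.2 j < p.1}
    have : {p : ℝ × (Fin k → ℝ) | ∀ j, p.2 j < p.1}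
        = ⋂ j, {p : ℝ × (Fin k → ℝ) | p.2 j < p.1} := by ext p; simp
    rw [this]
    exact MeasurableSet.iInter fun j =>
      measurableSet_lt (measurable_snd.eval) measurable_fst

lemma key (k : ℕ) : ∀ (s : ℕ) (t : ℝ), t ∈ Set.Icc (0:ℝ) 1 →
    Measure.pi (fun i : Fin k => mA ((i:ℕ)+s))
      {x | (∀ i j : Fin k, i < j → x j < x i) ∧ ∀ i, x i ≤ t}
    = ENNReal.ofReal (Cc k s * t ^ Esum k s) := by
  induction k with
  | zero =>
    intro s t ht
    have he : {x : Fin 0 → ℝ | (∀ i j : Fin 0, i < j → x j < x i) ∧ ∀ i, x i ≤ t}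
        = Set.univ := by
      ext x; simp
    rw [he]
    simp [Esum, Cc]
  | succ k ih =>
    intro s t ht
    set μs : Fin (k+1) → Measure ℝ := fun i => mA ((i:ℕ)+s) with hμs
    set ν' : Measure (Fin k → ℝ) := Measure.pi (fun j : Fin k => mA ((j:ℕ)+(s+1))) with hν'
    have hfam : (fun j : Fin k => μs ((0:Fin (k+1)).succAbove j))
        = fun j : Fin k => mA ((j:ℕ)+(s+1)) := by
      funext j
      simp only [hμs, Fin.succAbove_zero, Fin.val_succ]
      congr 1
      omega
    have hμs0 : μs 0 = mA s := by simp [hμs]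
    set B : Set (ℝ × (Fin k → ℝ)) := {p |
      (p.1 ≤ t ∧ ∀ i j : Fin k, i < j → p.2 j < p.2 i) ∧ ∀ j, p.2 j < p.1} with hB
    have hAB : {x : Fin (k+1) → ℝ | (∀ i j : Fin (k+1), i < j → x j < x i) ∧ ∀ i, x i ≤ t}
        = (MeasurableEquiv.piFinSuccAbove (fun _ => ℝ) 0) ⁻¹' B := by
      ext x
      simp only [Set.mem_preimage, MeasurableEquiv.piFinSuccAbove_apply, hB, Set.mem_setOf_eq,
        Fin.insertNthEquiv, Equiv.coe_fn_symm_mk, Fin.succAbove_zero]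
      constructor
      · rintro ⟨hchain, hle⟩
        exact ⟨⟨hle 0, fun i j hij => hchain i.succ j.succ (Fin.succ_lt_succ_iff.2 hij)⟩,
          fun j => hchain 0 j.succ (Fin.succ_pos j)⟩
      · rintro ⟨⟨h0t, hchain⟩, hlt⟩
        constructor
        · intro i j hij
          rcases Fin.eq_zero_or_eq_succ j with rfl | ⟨j', rfl⟩
          · exact absurd hij (by simp [Fin.not_lt_zero, Fin.le_zero_iff.1 hij.le] at hij ⊢)
          rcases Fin.eq_zero_or_eq_succ i with rfl | ⟨i', rfl⟩
          · exact hlt j'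
          · exact hchain i' j' (Fin.succ_lt_succ_iff.1 hij)
        · intro i
          rcases Fin.eq_zero_or_eq_succ i with rfl | ⟨i', rfl⟩
          · exact h0t
          · exact le_trans (hlt i').le h0t
    have MP := measurePreserving_piFinSuccAbove μs 0
    rw [hAB]
    rw [MP.measure_preimage (B_meas k t).nullMeasurableSet]
    rw [hfam, hμs0, ← hν']
    rw [Measure.prod_apply (B_meas k t)]
    -- a.e. computation of slices
    have hae : ∀ᵐ x0 ∂ mA s, x0 ∈ Set.Ioc (0:ℝ) 1 := by
      have h1 : mA s ≪ volume.restrict (Set.Ioc (0:ℝ) 1) := withDensity_absolutelyContinuous _ _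
      exact h1.ae_le (ae_restrict_mem measurableSet_Ioc)
    have hslice : ∀ᵐ x0 ∂ mA s, ν' (Prod.mk x0 ⁻¹' B)
        = Set.indicator (Set.Iic t)
            (fun x0 => ENNReal.ofReal (Cc k (s+1) * x0 ^ Esum k (s+1))) x0 := by
      filter_upwards [hae] with x0 hx0
      by_cases hxt : x0 ≤ t
      · have hsl : Prod.mk x0 ⁻¹' B
            = {y : Fin k → ℝ | (∀ i j : Fin k, i < j → y j < y i) ∧ ∀ j, y j < x0} := by
          ext y; simp only [hB, Set.mem_preimage, Set.mem_setOf_eq]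
          tauto
        have hle : ν' {y : Fin k → ℝ | (∀ i j : Fin k, i < j → y j < y i) ∧ ∀ j, y j < x0}
            = ν' {y : Fin k → ℝ | (∀ i j : Fin k, i < j → y j < y i) ∧ ∀ j, y j ≤ x0} := by
          refine le_antisymm (measure_mono fun y ⟨h1, h2⟩ => ⟨h1, fun j => (h2 j).le⟩) ?_
          have hsub : {y : Fin k → ℝ | (∀ i j : Fin k, i < j → y j < y i) ∧ ∀ j, y j ≤ x0}
              ⊆ {y : Fin k → ℝ | (∀ i j : Fin k, i < j → y j < y i) ∧ ∀ j, y j < x0}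
                ∪ ⋃ j : Fin k, {y : Fin k → ℝ | y j = x0} := by
            rintro y ⟨h1, h2⟩
            by_cases h3 : ∀ j, y j < x0
            · exact Or.inl ⟨h1, h3⟩
            · push_neg at h3
              obtain ⟨j, hj⟩ := h3
              exact Or.inr (Set.mem_iUnion.2 ⟨j, le_antisymm (h2 j) hj⟩)
          calc ν' _ ≤ ν' ({y : Fin k → ℝ | (∀ i j : Fin k, i < j → y j < y i) ∧ ∀ j, y j < x0}
                ∪ ⋃ j : Fin k, {y : Fin k → ℝ | y j = x0}) := measure_mono hsub
            _ ≤ ν' {y : Fin k → ℝ | (∀ i j : Fin k, i < j → y j < y i) ∧ ∀ j, y j < x0}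
                + ν' (⋃ j : Fin k, {y : Fin k → ℝ | y j = x0}) := measure_union_le _ _
            _ = ν' {y : Fin k → ℝ | (∀ i j : Fin k, i < j → y j < y i) ∧ ∀ j, y j < x0} := by
                rw [measure_iUnion_null fun j => Measure.pi_hyperplane _ j x0, add_zero]
        rw [hsl, hle, ih (s+1) x0 ⟨hx0.1.le, hx0.2⟩,
          Set.indicator_of_mem (Set.mem_Iic.2 hxt)]
      · have hsl : Prod.mk x0 ⁻¹' B = ∅ := by
          ext y; simp only [hB, Set.mem_preimage, Set.mem_setOf_eq, Set.mem_empty_iff_false]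
          tauto
        rw [hsl, measure_empty, Set.indicator_of_notMem (by simpa using hxt)]
    rw [lintegral_congr_ae hslice]
    rw [lintegral_indicator measurableSet_Iic]
    -- now unfold mA s
    have hpowmeas : Measurable fun x : ℝ =>
        ENNReal.ofReal (Cc k (s+1) * x ^ Esum k (s+1)) :=
      (measurable_const.mul ((measurable_id (α := ℝ)).pow_const _)).ennreal_ofReal
    rw [mA, restrict_withDensity measurableSet_Iic,
      lintegral_withDensity_eq_lintegral_mul _ (mA_meas s) hpowmeas]
    rw [Measure.restrict_restrict measurableSet_Iic, Iic_inter_Ioc ht.2]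
    simp only [Pi.mul_apply]
    have hcong : ∫⁻ x in Set.Ioc (0:ℝ) t,
          ENNReal.ofReal ((s+1) * x^s) *
            ENNReal.ofReal (Cc k (s+1) * x ^ Esum k (s+1)) ∂volume
        = ∫⁻ x in Set.Ioc (0:ℝ) t,
            ENNReal.ofReal ((Cc k (s+1) * ((s:ℝ)+1)) * x ^ (Esum k (s+1) + s)) ∂volume := by
      refine setLIntegral_congr_fun measurableSet_Ioc ?_
      intro x hx
      beta_reduce
      rw [← ENNReal.ofReal_mul (mul_nonneg (by positivity) (pow_nonneg hx.1.le _))]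
      congr 1
      rw [pow_add]
      ring
    rw [hcong, lint_pow _ (mul_nonneg (Cc_nonneg k (s+1)) (by positivity)) _ _ ht.1]
    congr 1
    have hEe : Esum (k+1) s = Esum k (s+1) + s + 1 := by
      simp [Esum]; omega
    have hCe : Cc (k+1) s = ((s:ℝ)+1)/(Esum (k+1) s) * Cc k (s+1) := rfl
    rw [hCe, hEe]
    push_cast
    ring

lemma map_Z_eq {Ω : Type*} [MeasurableSpace Ω] (μ : Measure Ω) [IsProbabilityMeasure μ]
    (Z : Ω → ℝ) (hZ : Measurable Z) (a : ℕ)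
    (hcdf : ∀ t ∈ Set.Icc (0 : ℝ) 1, μ {ω | Z ω ≤ t} = ENNReal.ofReal (t ^ (a + 1))) :
    Measure.map Z μ = mA a := by
  have hmap : ∀ t : ℝ, Measure.map Z μ (Set.Iic t) = μ {ω | Z ω ≤ t} := fun t => by
    rw [Measure.map_apply hZ measurableSet_Iic]; rfl
  have := Measure.isProbabilityMeasure_map (μ := μ) hZ.aemeasurable
  refine Measure.ext_of_Iic _ _ (fun t => ?_)
  rcases le_or_gt t 1 with h1 | h1
  · rcases le_or_gt 0 t with h0 | h0
    · rw [hmap, hcdf t ⟨h0, h1⟩, mA_Ioc a h0 h1]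
    · have hz : μ {ω | Z ω ≤ t} = 0 := by
        have h01 : μ {ω | Z ω ≤ (0:ℝ)} = 0 := by
          rw [hcdf 0 ⟨le_refl _, by norm_num⟩]
          simp
        refine measure_mono_null ?_ h01
        intro ω hω; exact le_trans hω h0.le
      rw [hmap, hz]
      have : mA a (Set.Iic t) = 0 := by
        rw [mA_apply a measurableSet_Iic]
        apply setLIntegral_measure_zero
        refine measure_mono_null ?_ (measure_empty (μ := volume))
        rintro x ⟨hx1, hx2, _⟩
        exact absurd (lt_of_lt_of_le hx2 hx1) (not_lt.2 h0.le)
      rw [this]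
  · have key1 : μ {ω | Z ω ≤ (1:ℝ)} = 1 := by
      rw [hcdf 1 ⟨by norm_num, le_refl _⟩]; simp
    have h1' : Measure.map Z μ (Set.Iic t) = 1 := by
      refine le_antisymm prob_le_one ?_
      rw [hmap]
      calc (1:ℝ≥0∞) = μ {ω | Z ω ≤ (1:ℝ)} := key1.symm
        _ ≤ μ {ω | Z ω ≤ t} := measure_mono (fun ω hω => le_trans hω h1.le)
    have h2' : mA a (Set.Iic t) = 1 := by
      refine le_antisymm prob_le_one ?_
      calc (1:ℝ≥0∞) = mA a (Set.Iic 1) := by rw [mA_Ioc a (by norm_num) (le_refl _)]; simp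
        _ ≤ mA a (Set.Iic t) := measure_mono (Set.Iic_subset_Iic.2 h1.le)
    rw [h1', h2']

lemma map_joint {n : ℕ} {Ω : Type*} [MeasurableSpace Ω] (μ : Measure Ω)
    [IsProbabilityMeasure μ] (Z : Fin n → Ω → ℝ) (hZ : ∀ i, Measurable (Z i))
    (hind : iIndepFun Z μ)
    (hmarg : ∀ i, Measure.map (Z i) μ = mA ((i : ℕ))) :
    Measure.map (fun ω i => Z i ω) μ = Measure.pi (fun i : Fin n => mA ((i : ℕ))) := by
  have hG : Measurable (fun ω i => Z i ω) := measurable_pi_lambda _ hZ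
  refine (Measure.pi_eq (fun s hs => ?_)).symm
  rw [Measure.map_apply hG (MeasurableSet.univ_pi hs)]
  have : (fun ω i => Z i ω) ⁻¹' (Set.pi Set.univ s) = ⋂ i ∈ Finset.univ, Z i ⁻¹' s i := by
    ext ω; simp [Set.mem_pi]
  rw [this, hind.measure_inter_preimage_eq_mul Finset.univ (fun i _ => hs i)]
  refine Finset.prod_congr rfl (fun i _ => ?_)
  rw [← hmarg i, Measure.map_apply (hZ i) (hs i)]

/-- The probability that the inverse-unfair permutation `ρ_n` equals the
reversal permutation `w₀(i) = n + 1 - i` is `2^n n! / (2n)!`, and likewise for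
the unfair permutation `γ_n = ρ_n⁻¹`. -/
theorem stmt_3 {n : ℕ} (hn : 1 ≤ n) {Ω : Type*} [MeasurableSpace Ω]
    (μ : Measure Ω) (Z : Fin n → Ω → ℝ) (ρ : Ω → Equiv.Perm (Fin n))
    (h : IsInverseUnfair μ Z ρ) :
    μ {ω | ρ ω = Fin.revPerm}
        = ENNReal.ofReal ((2 : ℝ) ^ n * (Nat.factorial n : ℝ)
            / (Nat.factorial (2 * n) : ℝ)) ∧
    μ {ω | (ρ ω)⁻¹ = Fin.revPerm}
        = ENNReal.ofReal ((2 : ℝ) ^ n * (Nat.factorial n : ℝ)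
            / (Nat.factorial (2 * n) : ℝ)) := by
  obtain ⟨hprob, hmeas, hindep, hcdf, hrhoMeas, hrank⟩ := h
  haveI := hprob
  have hsetinv : {ω | (ρ ω)⁻¹ = Fin.revPerm} = {ω | ρ ω = Fin.revPerm} := by
    have hrev : (Fin.revPerm : Equiv.Perm (Fin n))⁻¹ = Fin.revPerm := by
      ext i
      simp [Equiv.Perm.inv_def]
    ext ω
    simp only [Set.mem_setOf_eq]
    constructor
    · intro hh
      calc ρ ω = ((ρ ω)⁻¹)⁻¹ := (inv_inv _).symm
        _ = Fin.revPerm := by rw [hh, hrev]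
    · intro hh; rw [hh, hrev]
  have hb : ∀ᵐ ω ∂μ, ∀ i, Z i ω ≤ 1 := by
    rw [ae_all_iff]
    intro i
    have h1 : μ {ω | Z i ω ≤ 1} = 1 := by
      rw [hcdf i 1 ⟨by norm_num, le_refl _⟩]; simp
    have hm : MeasurableSet {ω | Z i ω ≤ 1} := (hmeas i) measurableSet_Iic
    rw [ae_iff]
    have he : {ω | ¬ Z i ω ≤ 1} = {ω | Z i ω ≤ 1}ᶜ := rfl
    rw [he, measure_compl hm (measure_ne_top μ _), h1, measure_univ, tsub_self]
  have hiff : ∀ᵐ ω ∂μ, (ρ ω = Fin.revPerm ↔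
      ((∀ i j : Fin n, i < j → Z j ω < Z i ω) ∧ ∀ i, Z i ω ≤ 1)) := by
    filter_upwards [hrank, hb] with ω hr hbd
    constructor
    · intro hρ
      refine ⟨fun i j hij => ?_, hbd⟩
      have hlt : ρ ω j < ρ ω i := by
        rw [hρ]
        simpa using (Fin.rev_lt_rev (i := j) (j := i)).2 hij
      exact (hr j i).1 hlt
    · rintro ⟨hchain, _⟩
      have hZiff : ∀ a b : Fin n, Z a ω < Z b ω ↔ b < a := by
        intro a b
        constructor
        · intro hZ
          rcases lt_trichotomy a b with hab | rfl | hab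
          · exact absurd hZ (not_lt.2 (hchain a b hab).le)
          · exact absurd hZ (lt_irrefl _)
          · exact hab
        · intro hba; exact hchain b a hba
      have hmono : StrictMono (fun i : Fin n => ρ ω (Fin.rev i)) := by
        intro a b hab
        exact (hr _ _).2 ((hZiff _ _).2 (Fin.rev_lt_rev.2 hab))
      have hsurj : Function.Surjective (fun i : Fin n => ρ ω (Fin.rev i)) := by
        intro y
        exact ⟨Fin.rev ((ρ ω).symm y), by simp⟩
      have hrange : Set.range (fun i : Fin n => ρ ω (Fin.rev i))
          = Set.range (id : Fin n → Fin n) := by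
        rw [Set.range_id, hsurj.range_eq]
      have instwf : WellFoundedLT (Fin n) := inferInstance
      have hid := (hmono.range_inj (strictMono_id (α := Fin n))).1 hrange
      refine Equiv.ext fun i => ?_
      have h2 := congrFun hid (Fin.rev i)
      simp only [Fin.rev_rev, id_eq] at h2
      rw [h2]
      rfl
  have hμeq : μ {ω | ρ ω = Fin.revPerm}
      = μ {ω | (∀ i j : Fin n, i < j → Z j ω < Z i ω) ∧ ∀ i, Z i ω ≤ 1} :=
    measure_congr (Filter.eventuallyEq_set.2 hiff)
  have hmarg : ∀ i : Fin n, Measure.map (Z i) μ = mA (i : ℕ) := fun i =>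
    map_Z_eq μ (Z i) (hmeas i) (i : ℕ) (hcdf i)
  have hjoint := map_joint μ Z hmeas hindep hmarg
  have hG : Measurable (fun ω (i : Fin n) => Z i ω) := measurable_pi_lambda _ hmeas
  have hpre : {ω | (∀ i j : Fin n, i < j → Z j ω < Z i ω) ∧ ∀ i, Z i ω ≤ 1}
      = (fun ω (i : Fin n) => Z i ω) ⁻¹'
        {x : Fin n → ℝ | (∀ i j : Fin n, i < j → x j < x i) ∧ ∀ i, x i ≤ 1} := rfl
  have hkey := key n 0 1 ⟨by norm_num, le_refl _⟩
  have hfam0 : (fun i : Fin n => mA ((i:ℕ)+0)) = fun i : Fin n => mA (i:ℕ) := by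
    funext i; simp
  rw [hfam0] at hkey
  have hCc : Cc n 0 = (2:ℝ)^n * (Nat.factorial n : ℝ) / (Nat.factorial (2*n) : ℝ) := by
    rw [Cc_closed]
    have hfn : (Nat.factorial n : ℝ) ≠ 0 := Nat.cast_ne_zero.2 (Nat.factorial_ne_zero n)
    have hf2n : (Nat.factorial (2*n) : ℝ) ≠ 0 := Nat.cast_ne_zero.2 (Nat.factorial_ne_zero _)
    simp only [Nat.zero_add, Nat.add_zero, Nat.mul_zero, Nat.factorial_zero, Nat.cast_one]
    field_simp
  have hmain : μ {ω | ρ ω = Fin.revPerm}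
      = ENNReal.ofReal ((2 : ℝ) ^ n * (Nat.factorial n : ℝ)
          / (Nat.factorial (2 * n) : ℝ)) := by
    rw [hμeq, hpre, ← Measure.map_apply hG (chainSet_meas n 1), hjoint, hkey, one_pow,
      mul_one, hCc]
  exact ⟨hmain, by rw [hsetinv]; exact hmain⟩
end

section
/- For every permutation σ ∈ S_n, one has P(ρ_n = w_0) ≤ P(ρ_n = σ) ≤ P(ρ_n = id), where id is the identity permutation and w_0 is the reversal permutation w_0(i) = n+1−i; that is, the probability mass function of ρ_n attains its maximum at the identity and its minimum at the reversal. -/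
open MeasureTheory ProbabilityTheory Filter
open scoped ENNReal NNReal Topology

section Comb
variable {n : ℕ}

private lemma key_le_one (P : Equiv.Perm (Fin n) → ℝ≥0∞)
    (key : ∀ σ : Equiv.Perm (Fin n), ∀ i j : Fin n, i < j → σ j < σ i →
      P σ ≤ P (σ * Equiv.swap i j)) (σ : Equiv.Perm (Fin n)) : P σ ≤ P 1 := by
  generalize hm : (Finset.univ.filter fun k => σ k ≠ k).card = m
  induction m using Nat.strong_induction_on generalizing σ with
  | _ m ih =>
    rcases Nat.eq_zero_or_pos m with rfl | hpos
    · have he : (Finset.univ.filter fun k => σ k ≠ k) = ∅ := Finset.card_eq_zero.mp hm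
      have : σ = 1 := by
        refine Equiv.ext fun k => ?_
        by_contra hk
        have : k ∈ Finset.univ.filter fun k => σ k ≠ k := by
          simp only [Finset.mem_filter, Finset.mem_univ, true_and]
          simpa using hk
        simp [he] at this
      simp [this]
    · set s := (Finset.univ.filter fun k => σ k ≠ k) with hs
      have hsne : s.Nonempty := Finset.card_pos.mp (hm ▸ hpos)
      set i := s.min' hsne with hi
      have himem : i ∈ s := s.min'_mem hsne
      have hσi : σ i ≠ i := (Finset.mem_filter.mp himem).2
      have hfix : ∀ k, k < i → σ k = k := by
        intro k hk
        by_contra hne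
        have : k ∈ s := by simp [hs, hne]
        exact absurd (s.min'_le k this) (not_le.mpr hk)
      have hilt : i < σ i := by
        rcases lt_trichotomy (σ i) i with hlt | heq | hgt
        · have := hfix (σ i) hlt
          exact absurd (σ.injective this) hσi
        · exact absurd heq hσi
        · exact hgt
      set j := σ.symm i with hj
      have hσj : σ j = i := σ.apply_symm_apply i
      have hjne : j ≠ i := by
        intro hji; rw [hji] at hσj; exact hσi hσj
      have hij : i < j := by
        rcases lt_trichotomy j i with hlt | heq | hgt
        · have := hfix j hlt; rw [this] at hσj; exact absurd hσj hjne
        · exact absurd heq hjne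
        · exact hgt
      have hkey := key σ i j hij (by rw [hσj]; exact hilt)
      set σ' := σ * Equiv.swap i j with hσ'
      have hσ'i : σ' i = i := by
        simp [hσ', Equiv.Perm.mul_apply, Equiv.swap_apply_left, hσj]
      have hσ'j : σ' j = σ i := by
        simp [hσ', Equiv.Perm.mul_apply, Equiv.swap_apply_right]
      have hsub : (Finset.univ.filter fun k => σ' k ≠ k) ⊆ s.erase i := by
        intro k hk
        have hk' : σ' k ≠ k := (Finset.mem_filter.mp hk).2
        rcases eq_or_ne k i with rfl | hki
        · exact absurd hσ'i hk'
        rcases eq_or_ne k j with rfl | hkj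
        · refine Finset.mem_erase.mpr ⟨hki, ?_⟩
          simp [hs]
          rw [hσj]; exact fun hcc => hjne hcc.symm
        · refine Finset.mem_erase.mpr ⟨hki, ?_⟩
          have : σ' k = σ k := by
            simp [hσ', Equiv.Perm.mul_apply, Equiv.swap_apply_of_ne_of_ne hki hkj]
          simp [hs]
          rw [← this]; exact hk'
      have hcard : (Finset.univ.filter fun k => σ' k ≠ k).card < m := by
        calc (Finset.univ.filter fun k => σ' k ≠ k).card
            ≤ (s.erase i).card := Finset.card_le_card hsub
          _ < s.card := Finset.card_erase_lt_of_mem himem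
          _ = m := hm
      exact hkey.trans (ih _ hcard σ' rfl)
end Comb

section Comb
variable {n : ℕ}

private lemma key_rev_le (P : Equiv.Perm (Fin n) → ℝ≥0∞)
    (key : ∀ σ : Equiv.Perm (Fin n), ∀ i j : Fin n, i < j → σ j < σ i →
      P σ ≤ P (σ * Equiv.swap i j)) (σ : Equiv.Perm (Fin n)) :
    P Fin.revPerm ≤ P σ := by
  have key' : ∀ σ : Equiv.Perm (Fin n), ∀ i j : Fin n, i < j → σ i < σ j →
      P (σ * Equiv.swap i j) ≤ P σ := by
    intro σ i j hij hlt
    have h2 : (σ * Equiv.swap i j) j < (σ * Equiv.swap i j) i := by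
      simpa [Equiv.Perm.mul_apply] using hlt
    have := key (σ * Equiv.swap i j) i j hij h2
    rwa [mul_assoc, Equiv.swap_mul_self, mul_one] at this
  set r : Equiv.Perm (Fin n) := Fin.revPerm with hr
  generalize hm : (Finset.univ.filter fun k => σ k ≠ r k).card = m
  induction m using Nat.strong_induction_on generalizing σ with
  | _ m ih =>
    rcases Nat.eq_zero_or_pos m with rfl | hpos
    · have he : (Finset.univ.filter fun k => σ k ≠ r k) = ∅ := Finset.card_eq_zero.mp hm
      have : σ = r := by
        refine Equiv.ext fun k => ?_
        by_contra hk
        have : k ∈ Finset.univ.filter fun k => σ k ≠ r k := by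
          simp only [Finset.mem_filter, Finset.mem_univ, true_and]
          simpa using hk
        simp [he] at this
      simp [this]
    · set s := (Finset.univ.filter fun k => σ k ≠ r k) with hs
      have hsne : s.Nonempty := Finset.card_pos.mp (hm ▸ hpos)
      set i := s.min' hsne with hi
      have himem : i ∈ s := s.min'_mem hsne
      have hσi : σ i ≠ r i := (Finset.mem_filter.mp himem).2
      have hfix : ∀ k, k < i → σ k = r k := by
        intro k hk
        by_contra hne
        have : k ∈ s := by simp [hs, hne]
        exact absurd (s.min'_le k this) (not_le.mpr hk)
      have hilt : σ i < r i := by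
        rcases lt_trichotomy (σ i) (r i) with hlt | heq | hgt
        · exact hlt
        · exact absurd heq hσi
        · exfalso
          set m' := (σ i).rev with hm'
          have hrm' : r m' = σ i := by simp [hr, hm', Fin.rev_rev]
          have hm'i : m' < i := by
            have : r i < r m' := by rw [hrm']; exact hgt
            simpa [hr, Fin.rev_lt_rev] using this
          have := hfix m' hm'i
          rw [hrm'] at this
          exact absurd (σ.injective this) (ne_of_lt hm'i)
      set j := σ.symm (r i) with hj
      have hσj : σ j = r i := σ.apply_symm_apply (r i)
      have hjne : j ≠ i := by
        intro hji; rw [hji] at hσj; exact hσi hσj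
      have hij : i < j := by
        rcases lt_trichotomy j i with hlt | heq | hgt
        · have := hfix j hlt; rw [this] at hσj
          exact absurd (Fin.rev_injective (by simpa [hr] using hσj)) hjne
        · exact absurd heq hjne
        · exact hgt
      have hkey := key' σ i j hij (by rw [hσj]; exact hilt)
      set σ' := σ * Equiv.swap i j with hσ'
      have hσ'i : σ' i = r i := by
        simp [hσ', Equiv.Perm.mul_apply, Equiv.swap_apply_left, hσj]
      have hsub : (Finset.univ.filter fun k => σ' k ≠ r k) ⊆ s.erase i := by
        intro k hk
        have hk' : σ' k ≠ r k := (Finset.mem_filter.mp hk).2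
        rcases eq_or_ne k i with rfl | hki
        · exact absurd hσ'i hk'
        rcases eq_or_ne k j with rfl | hkj
        · refine Finset.mem_erase.mpr ⟨hki, ?_⟩
          simp only [hs, Finset.mem_filter, Finset.mem_univ, true_and]
          rw [hσj]
          intro hcc
          exact hki (Fin.rev_injective (by simpa [hr] using hcc)).symm
        · refine Finset.mem_erase.mpr ⟨hki, ?_⟩
          have : σ' k = σ k := by
            simp [hσ', Equiv.Perm.mul_apply, Equiv.swap_apply_of_ne_of_ne hki hkj]
          simp only [hs, Finset.mem_filter, Finset.mem_univ, true_and]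
          rw [← this]; exact hk'
      have hcard : (Finset.univ.filter fun k => σ' k ≠ r k).card < m := by
        calc (Finset.univ.filter fun k => σ' k ≠ r k).card
            ≤ (s.erase i).card := Finset.card_le_card hsub
          _ < s.card := Finset.card_erase_lt_of_mem himem
          _ = m := hm
      exact (ih _ hcard σ' rfl).trans hkey
end Comb

section MeasAux
variable {n : ℕ}

private def orderSet (σ : Equiv.Perm (Fin n)) : Set (Fin n → ℝ) :=
  {x | ∀ i j : Fin n, x i < x j ↔ σ i < σ j}

private lemma orderSet_meas (σ : Equiv.Perm (Fin n)) : MeasurableSet (orderSet σ) := by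
  have : orderSet σ = ⋂ (i : Fin n) (j : Fin n),
      {x : Fin n → ℝ | x i < x j ↔ σ i < σ j} := by
    ext x; simp [orderSet, Set.mem_iInter]
  rw [this]
  refine MeasurableSet.iInter fun i => MeasurableSet.iInter fun j => ?_
  by_cases hσ : σ i < σ j
  · have : {x : Fin n → ℝ | x i < x j ↔ σ i < σ j} = {x | x i < x j} := by
      ext x; simp [hσ]
    rw [this]
    exact measurableSet_lt (measurable_pi_apply i) (measurable_pi_apply j)
  · have : {x : Fin n → ℝ | x i < x j ↔ σ i < σ j} = {x | x i < x j}ᶜ := by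
      ext x; simp [hσ]
    rw [this]
    exact (measurableSet_lt (measurable_pi_apply i) (measurable_pi_apply j)).compl

private lemma lintegral_pi_prod : ∀ {n : ℕ} (g : Fin n → ℝ → ℝ≥0∞), (∀ i, Measurable (g i)) →
    ∫⁻ x : Fin n → ℝ, ∏ i, g i (x i) ∂(Measure.pi fun _ => (volume : Measure ℝ))
      = ∏ i, ∫⁻ t, g i t := by
  intro n
  induction n with
  | zero =>
    intro g _
    simp only [Finset.univ_eq_empty, Finset.prod_empty]
    rw [lintegral_const, one_mul, ← Set.pi_univ Set.univ, Measure.pi_pi]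
    simp
  | succ n ih =>
    intro g hg
    have hmp := (measurePreserving_piFinSuccAbove (fun _ : Fin (n+1) => (volume : Measure ℝ)) 0).symm
    rw [← hmp.lintegral_comp_emb (MeasurableEquiv.measurableEmbedding _)]
    have heval : ∀ z : ℝ × (Fin n → ℝ), ∀ i : Fin (n+1),
        ((MeasurableEquiv.piFinSuccAbove (fun _ => ℝ) 0).symm z) i = (Fin.cons z.1 z.2 : Fin (n+1) → ℝ) i := by
      intro z i
      simp [MeasurableEquiv.piFinSuccAbove_symm_apply, Fin.insertNthEquiv, Fin.insertNth_zero]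
    calc ∫⁻ z : ℝ × (Fin n → ℝ),
          ∏ i, g i (((MeasurableEquiv.piFinSuccAbove (fun _ => ℝ) 0).symm z) i)
          ∂((volume : Measure ℝ).prod (Measure.pi fun _ : Fin n => (volume : Measure ℝ)))
        = ∫⁻ z : ℝ × (Fin n → ℝ), g 0 z.1 * ∏ i : Fin n, g i.succ (z.2 i)
          ∂((volume : Measure ℝ).prod (Measure.pi fun _ : Fin n => (volume : Measure ℝ))) := by
          congr 1
          funext z
          simp_rw [heval z]
          rw [Fin.prod_univ_succ]
          simp
      _ = (∫⁻ t, g 0 t) * ∏ i : Fin n, ∫⁻ t, g i.succ t := by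
          have h2 := lintegral_prod_mul (μ := (volume : Measure ℝ))
            (ν := Measure.pi fun _ : Fin n => (volume : Measure ℝ)) (f := g 0)
            (g := fun y => ∏ i : Fin n, g i.succ (y i)) (hg 0).aemeasurable
            ((Finset.measurable_prod _ fun i _ =>
              (hg i.succ).comp (measurable_pi_apply i)).aemeasurable)
          exact h2.trans (by rw [ih _ fun i => hg i.succ])
      _ = ∏ i : Fin (n+1), ∫⁻ t, g i t := by rw [Fin.prod_univ_succ]

private lemma pi_withDensity (f : Fin n → ℝ → ℝ≥0∞) (hf : ∀ i, Measurable (f i))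
    [∀ i : Fin n, SigmaFinite ((volume : Measure ℝ).withDensity (f i))] :
    Measure.pi (fun i => (volume : Measure ℝ).withDensity (f i)) =
      (Measure.pi fun _ : Fin n => (volume : Measure ℝ)).withDensity
        fun x => ∏ i, f i (x i) := by
  refine Measure.pi_eq fun s hs => ?_
  rw [withDensity_apply _ (MeasurableSet.univ_pi hs),
    ← lintegral_indicator (MeasurableSet.univ_pi hs) (fun x => ∏ i, f i (x i))]
  have hind : ∀ x : Fin n → ℝ,
      (Set.univ.pi s).indicator (fun x => ∏ i, f i (x i)) x
        = ∏ i, (s i).indicator (f i) (x i) := by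
    intro x
    by_cases hx : x ∈ Set.univ.pi s
    · rw [Set.indicator_of_mem hx]
      exact Finset.prod_congr rfl fun i _ =>
        (Set.indicator_of_mem (hx i (Set.mem_univ i)) _).symm
    · rw [Set.indicator_of_notMem hx]
      rw [Set.mem_univ_pi] at hx
      push_neg at hx
      obtain ⟨i, hi⟩ := hx
      exact (Finset.prod_eq_zero (Finset.mem_univ i)
        (by rw [Set.indicator_of_notMem hi])).symm
  simp_rw [hind]
  rw [lintegral_pi_prod _ fun i => (hf i).indicator (hs i)]
  exact Finset.prod_congr rfl fun i _ => by
    rw [lintegral_indicator (hs i), withDensity_apply _ (hs i)]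
private lemma swapStep (f : Fin n → ℝ → ℝ≥0∞) (hf : ∀ i, Measurable (f i))
    (hmono : ∀ i j : Fin n, i < j → ∀ u v : ℝ, u < v → f j u * f i v ≤ f i u * f j v)
    (σ : Equiv.Perm (Fin n)) {i j : Fin n} (hij : i < j) (hσ : σ j < σ i) :
    ∫⁻ x in orderSet σ, ∏ k, f k (x k) ∂(Measure.pi fun _ => (volume : Measure ℝ))
      ≤ ∫⁻ x in orderSet (σ * Equiv.swap i j), ∏ k, f k (x k)
          ∂(Measure.pi fun _ => (volume : Measure ℝ)) := by
  set m : Measure (Fin n → ℝ) := Measure.pi fun _ => (volume : Measure ℝ) with hm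
  set τ : Equiv.Perm (Fin n) := Equiv.swap i j with hτ
  set σ' : Equiv.Perm (Fin n) := σ * τ with hσ'
  set Sw : (Fin n → ℝ) → (Fin n → ℝ) := fun x k => x (τ k) with hSw
  have hSwMeas : Measurable Sw :=
    measurable_pi_lambda _ fun k => measurable_pi_apply (τ k)
  have hSwMP : MeasurePreserving Sw m m := by
    refine ⟨hSwMeas, ?_⟩
    refine (Measure.pi_eq fun s hs => ?_).symm
    rw [Measure.map_apply hSwMeas (MeasurableSet.univ_pi hs)]
    have hpre : Sw ⁻¹' Set.univ.pi s = Set.univ.pi fun k => s (τ.symm k) := by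
      ext x
      simp only [Set.mem_preimage, Set.mem_univ_pi, hSw]
      constructor
      · intro hx k
        have := hx (τ.symm k)
        rwa [Equiv.apply_symm_apply] at this
      · intro hx k
        have := hx (τ k)
        rwa [Equiv.symm_apply_apply] at this
    rw [hpre, Measure.pi_pi]
    exact Equiv.prod_comp τ.symm fun k => (volume : Measure ℝ) (s k)
  have horder : ∀ x : Fin n → ℝ, x ∈ orderSet σ ↔ Sw x ∈ orderSet σ' := by
    intro x
    constructor
    · intro hx k l
      exact hx (τ k) (τ l)
    · intro hx k l
      have := hx (τ.symm k) (τ.symm l)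
      simpa [hSw, hσ', Equiv.Perm.mul_apply, Equiv.apply_symm_apply] using this
  set G : (Fin n → ℝ) → ℝ≥0∞ := fun x => ∏ k, f k (x k) with hG
  set H : (Fin n → ℝ) → ℝ≥0∞ :=
    (orderSet σ').indicator (fun y => ∏ k, f (τ k) (y k)) with hH
  have hGmeas : Measurable G :=
    Finset.measurable_prod _ fun k _ => (hf k).comp (measurable_pi_apply k)
  have hHmeas : Measurable H :=
    (Finset.measurable_prod _ fun k _ =>
      (hf (τ k)).comp (measurable_pi_apply k)).indicator (orderSet_meas σ')
  have hcomp : ∀ x, (orderSet σ).indicator G x = H (Sw x) := by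
    intro x
    by_cases hx : x ∈ orderSet σ
    · rw [Set.indicator_of_mem hx, hH,
        Set.indicator_of_mem ((horder x).mp hx)]
      rw [hG]
      have := Equiv.prod_comp τ fun k => f k (x k)
      simp only [hSw]
      rw [← this]
    · rw [Set.indicator_of_notMem hx, hH,
        Set.indicator_of_notMem (fun hc => hx ((horder x).mpr hc))]
  have hpoint : ∀ y, H y ≤ (orderSet σ').indicator G y := by
    intro y
    by_cases hy : y ∈ orderSet σ'
    · rw [hH, Set.indicator_of_mem hy, Set.indicator_of_mem hy]
      have hylt : y i < y j := by
        have h1 : σ' i = σ j := by simp [hσ', hτ, Equiv.Perm.mul_apply]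
        have h2 : σ' j = σ i := by simp [hσ', hτ, Equiv.Perm.mul_apply]
        exact (hy i j).mpr (by rw [h1, h2]; exact hσ)
      have hjmem : j ∈ Finset.univ.erase i :=
        Finset.mem_erase.mpr ⟨(ne_of_lt hij).symm, Finset.mem_univ j⟩
      have split : ∀ g : Fin n → ℝ≥0∞,
          ∏ k, g k = g i * (g j * ∏ k ∈ (Finset.univ.erase i).erase j, g k) := by
        intro g
        rw [Finset.mul_prod_erase _ _ hjmem, Finset.mul_prod_erase _ _ (Finset.mem_univ i)]
      show (∏ k, f (τ k) (y k)) ≤ ∏ k, f k (y k)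
      rw [split fun k => f (τ k) (y k), split fun k => f k (y k)]
      have hrest : ∏ k ∈ (Finset.univ.erase i).erase j, f (τ k) (y k)
          = ∏ k ∈ (Finset.univ.erase i).erase j, f k (y k) := by
        refine Finset.prod_congr rfl fun k hk => ?_
        have hkj : k ≠ j := (Finset.mem_erase.mp hk).1
        have hki : k ≠ i := (Finset.mem_erase.mp (Finset.mem_erase.mp hk).2).1
        rw [hτ, Equiv.swap_apply_of_ne_of_ne hki hkj]
      rw [hrest]
      have hti : τ i = j := Equiv.swap_apply_left i j
      have htj : τ j = i := Equiv.swap_apply_right i j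
      rw [hti, htj, ← mul_assoc, ← mul_assoc]
      exact mul_le_mul_left (hmono i j hij _ _ hylt) _
    · rw [hH, Set.indicator_of_notMem hy]
      exact zero_le
  calc ∫⁻ x in orderSet σ, G x ∂m
      = ∫⁻ x, (orderSet σ).indicator G x ∂m :=
        (lintegral_indicator (orderSet_meas σ) G).symm
    _ = ∫⁻ x, H (Sw x) ∂m := by simp_rw [hcomp]
    _ = ∫⁻ y, H y ∂m := hSwMP.lintegral_comp hHmeas
    _ ≤ ∫⁻ y, (orderSet σ').indicator G y ∂m := lintegral_mono hpoint
    _ = ∫⁻ x in orderSet σ', G x ∂m := lintegral_indicator (orderSet_meas σ') G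
end MeasAux

section Dens
variable {n : ℕ}

private noncomputable def dens (n : ℕ) (i : Fin n) : ℝ → ℝ≥0∞ :=
  Set.indicator (Set.Icc 0 1) fun t => ENNReal.ofReal ((((i : ℕ) : ℝ) + 1) * t ^ (i : ℕ))

private lemma dens_meas (i : Fin n) : Measurable (dens n i) :=
  (((measurable_id.pow_const _).const_mul _).ennreal_ofReal).indicator measurableSet_Icc

private lemma dens_mono : ∀ i j : Fin n, i < j → ∀ u v : ℝ, u < v →
    dens n j u * dens n i v ≤ dens n i u * dens n j v := by
  intro i j hij u v huv
  by_cases hu : u ∈ Set.Icc (0 : ℝ) 1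
  · by_cases hv : v ∈ Set.Icc (0 : ℝ) 1
    · simp only [dens, Set.indicator_of_mem hu, Set.indicator_of_mem hv]
      rw [← ENNReal.ofReal_mul (mul_nonneg (by positivity) (pow_nonneg hu.1 _)),
        ← ENNReal.ofReal_mul (mul_nonneg (by positivity) (pow_nonneg hu.1 _))]
      apply ENNReal.ofReal_le_ofReal
      have h0u : (0 : ℝ) ≤ u := hu.1
      have huv' : u ≤ v := le_of_lt huv
      have hijn : (i : ℕ) ≤ (j : ℕ) := le_of_lt hij
      have hkey : u ^ (j : ℕ) * v ^ (i : ℕ) ≤ u ^ (i : ℕ) * v ^ (j : ℕ) := by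
        have h1 : u ^ (j : ℕ) = u ^ (i : ℕ) * u ^ ((j : ℕ) - (i : ℕ)) := by
          rw [← pow_add, Nat.add_sub_cancel' hijn]
        have h2 : v ^ (j : ℕ) = v ^ ((j : ℕ) - (i : ℕ)) * v ^ (i : ℕ) := by
          rw [← pow_add, Nat.sub_add_cancel hijn]
        rw [h1, h2]
        have h3 : u ^ ((j : ℕ) - (i : ℕ)) ≤ v ^ ((j : ℕ) - (i : ℕ)) :=
          pow_le_pow_left₀ h0u huv' _
        calc u ^ (i : ℕ) * u ^ ((j : ℕ) - (i : ℕ)) * v ^ (i : ℕ)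
            ≤ u ^ (i : ℕ) * v ^ ((j : ℕ) - (i : ℕ)) * v ^ (i : ℕ) := by
              apply mul_le_mul_of_nonneg_right _ (pow_nonneg (le_trans h0u huv') _)
              exact mul_le_mul_of_nonneg_left h3 (pow_nonneg h0u _)
          _ = u ^ (i : ℕ) * (v ^ ((j : ℕ) - (i : ℕ)) * v ^ (i : ℕ)) := by ring
      calc (((j : ℕ) : ℝ) + 1) * u ^ (j : ℕ) * ((((i : ℕ) : ℝ) + 1) * v ^ (i : ℕ))
          = ((((i : ℕ) : ℝ) + 1) * (((j : ℕ) : ℝ) + 1)) * (u ^ (j : ℕ) * v ^ (i : ℕ)) := by ring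
        _ ≤ ((((i : ℕ) : ℝ) + 1) * (((j : ℕ) : ℝ) + 1)) * (u ^ (i : ℕ) * v ^ (j : ℕ)) := by
            apply mul_le_mul_of_nonneg_left hkey (by positivity)
        _ = (((i : ℕ) : ℝ) + 1) * u ^ (i : ℕ) * ((((j : ℕ) : ℝ) + 1) * v ^ (j : ℕ)) := by ring
    · simp [dens, Set.indicator_of_notMem hv]
  · simp [dens, Set.indicator_of_notMem hu]

private lemma lintegral_dens_Icc (i : Fin n) {a : ℝ} (h0 : 0 ≤ a) (h1 : a ≤ 1) :
    ∫⁻ s in Set.Icc 0 a, ENNReal.ofReal ((((i : ℕ) : ℝ) + 1) * s ^ (i : ℕ)) ∂volume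
      = ENNReal.ofReal (a ^ ((i : ℕ) + 1)) := by
  have hInt : IntegrableOn (fun s : ℝ => (((i : ℕ) : ℝ) + 1) * s ^ (i : ℕ)) (Set.Icc 0 a) :=
    (continuous_const.mul (continuous_pow _)).integrableOn_Icc
  have hnn : 0 ≤ᵐ[volume.restrict (Set.Icc 0 a)]
      fun s : ℝ => (((i : ℕ) : ℝ) + 1) * s ^ (i : ℕ) := by
    filter_upwards [ae_restrict_mem measurableSet_Icc] with s hs
    exact mul_nonneg (by positivity) (pow_nonneg hs.1 _)
  rw [← ofReal_integral_eq_lintegral_ofReal hInt hnn]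
  congr 1
  rw [MeasureTheory.integral_Icc_eq_integral_Ioc, ← intervalIntegral.integral_of_le h0]
  rw [intervalIntegral.integral_const_mul, integral_pow]
  rw [zero_pow (Nat.succ_ne_zero _)]
  field_simp
  simp

private lemma withDensity_dens_Iic (i : Fin n) (a : ℝ) :
    (volume : Measure ℝ).withDensity (dens n i) (Set.Iic a)
      = ENNReal.ofReal ((max 0 (min a 1)) ^ ((i : ℕ) + 1)) := by
  rw [withDensity_apply _ measurableSet_Iic]
  have hstep : ∫⁻ s in Set.Iic a, dens n i s ∂volume
      = ∫⁻ s in Set.Icc 0 1 ∩ Set.Iic a,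
          ENNReal.ofReal ((((i : ℕ) : ℝ) + 1) * s ^ (i : ℕ)) ∂volume := by
    rw [dens, lintegral_indicator measurableSet_Icc, Measure.restrict_restrict measurableSet_Icc]
  rw [hstep]
  rcases lt_or_ge a 0 with ha | ha0
  · have hempty : Set.Icc (0:ℝ) 1 ∩ Set.Iic a = ∅ := by
      ext s
      simp only [Set.mem_inter_iff, Set.mem_Icc, Set.mem_Iic, Set.mem_empty_iff_false,
        iff_false, not_and]
      intro h1 _
      linarith
    rw [hempty]
    have : max 0 (min a 1) = 0 := by
      rw [max_eq_left]
      exact le_trans (min_le_left a 1) (le_of_lt ha)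
    rw [this, zero_pow (Nat.succ_ne_zero _)]
    simp
  · rcases le_or_gt a 1 with ha1 | ha1
    · have hset : Set.Icc (0:ℝ) 1 ∩ Set.Iic a = Set.Icc 0 a := by
        ext s
        simp only [Set.mem_inter_iff, Set.mem_Icc, Set.mem_Iic]
        constructor
        · rintro ⟨⟨h1, _⟩, h3⟩; exact ⟨h1, h3⟩
        · rintro ⟨h1, h2⟩; exact ⟨⟨h1, le_trans h2 ha1⟩, h2⟩
      rw [hset, lintegral_dens_Icc i ha0 ha1]
      congr 2
      rw [min_eq_left ha1, max_eq_right ha0]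
    · have hset : Set.Icc (0:ℝ) 1 ∩ Set.Iic a = Set.Icc 0 1 := by
        ext s
        simp only [Set.mem_inter_iff, Set.mem_Icc, Set.mem_Iic]
        constructor
        · rintro ⟨⟨h1, h2⟩, _⟩; exact ⟨h1, h2⟩
        · rintro ⟨h1, h2⟩; exact ⟨⟨h1, h2⟩, le_trans h2 (le_of_lt ha1)⟩
      rw [hset, lintegral_dens_Icc i zero_le_one le_rfl]
      congr 2
      rw [min_eq_right (le_of_lt ha1), max_eq_right zero_le_one]
end Dens

/-- The probability mass function of the inverse-unfair permutation `ρ_n`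
attains its maximum at the identity and its minimum at the reversal
permutation `w₀(i) = n + 1 - i`: for every `σ ∈ S_n`,
`P(ρ_n = w₀) ≤ P(ρ_n = σ) ≤ P(ρ_n = id)`. -/
theorem stmt_5 {n : ℕ} (hn : 1 ≤ n) {Ω : Type*} [MeasurableSpace Ω]
    (μ : Measure Ω) (Z : Fin n → Ω → ℝ) (ρ : Ω → Equiv.Perm (Fin n))
    (h : IsInverseUnfair μ Z ρ) (σ : Equiv.Perm (Fin n)) :
    μ {ω | ρ ω = Fin.revPerm} ≤ μ {ω | ρ ω = σ} ∧
    μ {ω | ρ ω = σ} ≤ μ {ω | ρ ω = 1} := by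

  classical
  haveI := h.prob
  set ν : Fin n → Measure ℝ := fun i => Measure.map (Z i) μ with hν
  haveI hprob : ∀ i, IsProbabilityMeasure (ν i) := fun i =>
    Measure.isProbabilityMeasure_map (h.meas i).aemeasurable
  have hνd : ∀ i, ν i = (volume : Measure ℝ).withDensity (dens n i) := by
    intro i
    refine MeasureTheory.Measure.ext_of_Iic (ν i) _ fun a => ?_
    rw [withDensity_dens_Iic, hν, Measure.map_apply (h.meas i) measurableSet_Iic]
    rcases lt_or_ge a 0 with ha | ha0
    · have h2 : μ {ω | Z i ω ≤ 0} = 0 := by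
        have := h.cdf i 0 ⟨le_rfl, zero_le_one⟩
        rwa [zero_pow (Nat.succ_ne_zero _), ENNReal.ofReal_zero] at this
      have hsub : Z i ⁻¹' Set.Iic a ⊆ {ω | Z i ω ≤ 0} := fun ω hω =>
        le_trans hω (le_of_lt ha)
      rw [measure_mono_null hsub h2,
        max_eq_left (le_trans (min_le_left a 1) (le_of_lt ha)),
        zero_pow (Nat.succ_ne_zero _), ENNReal.ofReal_zero]
    · rcases le_or_gt a 1 with ha1 | ha1
      · have : Z i ⁻¹' Set.Iic a = {ω | Z i ω ≤ a} := rfl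
        rw [this, h.cdf i a ⟨ha0, ha1⟩, min_eq_left ha1, max_eq_right ha0]
      · have hle : μ (Z i ⁻¹' Set.Iic a) ≤ 1 := prob_le_one
        have hge : (1 : ℝ≥0∞) ≤ μ (Z i ⁻¹' Set.Iic a) := by
          have h1 := h.cdf i 1 ⟨zero_le_one, le_rfl⟩
          rw [one_pow, ENNReal.ofReal_one] at h1
          calc (1 : ℝ≥0∞) = μ {ω | Z i ω ≤ 1} := h1.symm
            _ ≤ μ (Z i ⁻¹' Set.Iic a) :=
                measure_mono fun ω hω => le_trans hω (le_of_lt ha1)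
        rw [le_antisymm hle hge, min_eq_right (le_of_lt ha1),
          max_eq_right zero_le_one, one_pow, ENNReal.ofReal_one]
  haveI hsf : ∀ i : Fin n, SigmaFinite ((volume : Measure ℝ).withDensity (dens n i)) :=
    fun i => by rw [← hνd i]; infer_instance
  set joint : Ω → (Fin n → ℝ) := fun ω i => Z i ω with hjoint
  have hjm : Measurable joint := measurable_pi_lambda _ h.meas
  have hmap : Measure.map joint μ = Measure.pi ν := by
    refine (Measure.pi_eq fun s hs => ?_).symm
    rw [Measure.map_apply hjm (MeasurableSet.univ_pi hs)]
    have hpre : joint ⁻¹' Set.univ.pi s = ⋂ k ∈ Finset.univ, Z k ⁻¹' s k := by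
      ext ω
      simp [hjoint, Set.mem_univ_pi]
    rw [hpre, h.indep.measure_inter_preimage_eq_mul Finset.univ (fun k _ => hs k)]
    exact Finset.prod_congr rfl fun k _ => (Measure.map_apply (h.meas k) (hs k)).symm
  have hae : ∀ σ : Equiv.Perm (Fin n), {ω | ρ ω = σ} =ᵐ[μ] joint ⁻¹' orderSet σ := by
    intro σ
    rw [Filter.eventuallyEq_set]
    filter_upwards [h.rank] with ω hω
    simp only [Set.mem_setOf_eq, Set.mem_preimage]
    constructor
    · intro hρ i j
      show Z i ω < Z j ω ↔ σ i < σ j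
      rw [← hρ]
      exact (hω i j).symm
    · intro hx
      have hcmp : ∀ i j, ρ ω i < ρ ω j ↔ σ i < σ j := fun i j =>
        (hω i j).trans (hx i j)
      have hsm : StrictMono fun k => σ ((ρ ω).symm k) := by
        intro k l hkl
        have h2 := hcmp ((ρ ω).symm k) ((ρ ω).symm l)
        rw [Equiv.apply_symm_apply, Equiv.apply_symm_apply] at h2
        exact h2.mp hkl
      have hid : (fun k => σ ((ρ ω).symm k)) = id := by
        haveI : WellFoundedLT (Fin n) := inferInstance
        refine (StrictMono.range_inj (β := Fin n) (γ := Fin n) hsm strictMono_id).1 ?_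
        rw [Set.range_id]
        have h3 : (fun k => σ ((ρ ω).symm k)) = ⇑((ρ ω).symm.trans σ) := rfl
        rw [h3]
        exact Set.range_eq_univ.mpr (Equiv.surjective _)
      refine Equiv.ext fun i => ?_
      have h4 := congrFun hid (ρ ω i)
      simp only [Equiv.symm_apply_apply, id_eq] at h4
      exact h4.symm
  have hP : ∀ σ : Equiv.Perm (Fin n), μ {ω | ρ ω = σ}
      = ∫⁻ x in orderSet σ, ∏ k, dens n k (x k)
          ∂(Measure.pi fun _ : Fin n => (volume : Measure ℝ)) := by
    intro σ
    calc μ {ω | ρ ω = σ} = μ (joint ⁻¹' orderSet σ) := measure_congr (hae σ)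
      _ = Measure.map joint μ (orderSet σ) :=
          (Measure.map_apply hjm (orderSet_meas σ)).symm
      _ = Measure.pi ν (orderSet σ) := by rw [hmap]
      _ = _ := by
          have h5 : ν = fun i => (volume : Measure ℝ).withDensity (dens n i) :=
            funext hνd
          rw [h5, pi_withDensity _ (fun i => dens_meas i),
            withDensity_apply _ (orderSet_meas σ)]
  set P : Equiv.Perm (Fin n) → ℝ≥0∞ := fun σ => μ {ω | ρ ω = σ} with hPdef
  have key : ∀ σ : Equiv.Perm (Fin n), ∀ i j : Fin n, i < j → σ j < σ i →
      P σ ≤ P (σ * Equiv.swap i j) := by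
    intro σ i j hij hσ
    show μ {ω | ρ ω = σ} ≤ μ {ω | ρ ω = σ * Equiv.swap i j}
    rw [hP σ, hP (σ * Equiv.swap i j)]
    exact swapStep (dens n) (fun i => dens_meas i) dens_mono σ hij hσ
  exact ⟨key_rev_le P key σ, key_le_one P key σ⟩
end

section
/- The total variation distance between the law of the inverse-unfair permutation ρ_n and the uniform distribution on S_n converges to 1 as n → ∞. -/
open MeasureTheory ProbabilityTheory Filter
open scoped ENNReal NNReal Topology

lemma meas_mem_finset {n : ℕ} {Ω : Type*} [MeasurableSpace Ω] {μ : Measure Ω}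
    {ρ : Ω → Equiv.Perm (Fin n)}
    (hmeas : ∀ σ : Equiv.Perm (Fin n), MeasurableSet {ω | ρ ω = σ})
    (S : Finset (Equiv.Perm (Fin n))) :
    μ {ω | ρ ω ∈ S} = ∑ σ ∈ S, μ {ω | ρ ω = σ} := by
  have h1 : {ω | ρ ω ∈ S} = ⋃ σ ∈ S, {ω | ρ ω = σ} := by
    ext ω; simp [Set.mem_iUnion]
  rw [h1, measure_biUnion_finset _ (fun σ _ => hmeas σ)]
  intro σ _ τ _ hστ
  simp only [Function.onFun, Set.disjoint_left]
  intro ω h1 h2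
  exact hστ (h1.symm.trans h2)

lemma perm_val_eq_card {n : ℕ} (π : Equiv.Perm (Fin n)) (i : Fin n) :
    ((π i : Fin n) : ℕ) = (Finset.univ.filter fun j => π j < π i).card := by
  have h1 : (Finset.univ.filter fun j => π j < π i)
      = (Finset.univ.filter fun v => v < π i).map π.symm.toEmbedding := by
    ext j
    simp only [Finset.mem_filter, Finset.mem_map, Finset.mem_univ, true_and,
      Equiv.coe_toEmbedding]
    constructor
    · intro hj; exact ⟨π j, hj, π.symm_apply_apply j⟩
    · rintro ⟨v, hv, rfl⟩; simpa using hv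
  rw [h1, Finset.card_map]
  have : (Finset.univ.filter fun v : Fin n => v < π i) = Finset.Iio (π i) := by
    ext v; simp
  rw [this, Fin.card_Iio]

/-- The key tail bound: P(rank of player 0 ≥ k) ≤ (1-t) + (1/(1-t))/k. -/
lemma tail_bound {n : ℕ} (hn : 0 < n) {Ω : Type*} [MeasurableSpace Ω]
    {μ : Measure Ω} {Z : Fin n → Ω → ℝ} {ρ : Ω → Equiv.Perm (Fin n)}
    (h : IsInverseUnfair μ Z ρ) (k : ℕ) (hk : 0 < k) (t : ℝ)
    (ht0 : 0 ≤ t) (ht1 : t < 1) :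
    μ {ω | k ≤ ((ρ ω ⟨0, hn⟩ : Fin n) : ℕ)}
      ≤ ENNReal.ofReal (1 - t) + ENNReal.ofReal (1 / (1 - t)) / k := by
  haveI := h.prob
  set i0 : Fin n := ⟨0, hn⟩
  set B : Fin n → Set Ω := fun j => {ω | Z j ω ≤ t} with hBdef
  have hB : ∀ j, MeasurableSet (B j) := fun j =>
    measurableSet_le (h.meas j) measurable_const
  set f : Ω → ℝ≥0∞ := fun ω => ∑ j ∈ Finset.univ.erase i0, (B j).indicator 1 ω
    with hfdef
  have hf : Measurable f :=
    Finset.measurable_sum _ fun j _ => measurable_one.indicator (hB j)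
  -- a.e. inclusion
  set U : Set Ω := ({ω | t < Z i0 ω} : Set Ω) ∪ ({ω | (k : ℝ≥0∞) ≤ f ω} : Set Ω) with hU
  have hincl : ({ω | k ≤ ((ρ ω i0 : Fin n) : ℕ)} : Set Ω) ≤ᵐ[μ] U := by
    filter_upwards [h.rank] with ω hω hk'
    by_cases hz : t < Z i0 ω
    · exact Or.inl hz
    push_neg at hz
    right
    set S := Finset.univ.filter fun j => ρ ω j < ρ ω i0 with hS
    have hcard : k ≤ S.card := by
      rw [← perm_val_eq_card (ρ ω) i0]; exact hk'
    have hsub : S ⊆ Finset.univ.erase i0 := by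
      intro j hj
      rw [Finset.mem_erase]
      refine ⟨?_, Finset.mem_univ _⟩
      rintro rfl
      exact absurd (Finset.mem_filter.1 hj).2 (lt_irrefl _)
    have hone : ∀ j ∈ S, (B j).indicator (1 : Ω → ℝ≥0∞) ω = 1 := by
      intro j hj
      have hjlt : Z j ω < Z i0 ω := (hω j i0).1 (Finset.mem_filter.1 hj).2
      have : ω ∈ B j := le_of_lt (lt_of_lt_of_le hjlt hz)
      simp [Set.indicator_of_mem this]
    calc (k : ℝ≥0∞) ≤ (S.card : ℝ≥0∞) := by exact_mod_cast hcard
      _ = ∑ j ∈ S, (B j).indicator (1 : Ω → ℝ≥0∞) ω := by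
          rw [Finset.sum_congr rfl hone]; simp
      _ ≤ f ω := Finset.sum_le_sum_of_subset hsub
  have step1 : μ {ω | k ≤ ((ρ ω i0 : Fin n) : ℕ)}
      ≤ μ {ω | t < Z i0 ω} + μ {ω | (k : ℝ≥0∞) ≤ f ω} :=
    le_trans (measure_mono_ae hincl) (measure_union_le _ _)
  -- first term
  have hterm1 : μ {ω | t < Z i0 ω} = ENNReal.ofReal (1 - t) := by
    have hc : {ω | t < Z i0 ω} = {ω | Z i0 ω ≤ t}ᶜ := by
      ext ω; simp [not_le]
    have hcdf := h.cdf i0 t ⟨ht0, le_of_lt ht1⟩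
    rw [hc, measure_compl (hB i0) (measure_ne_top _ _), measure_univ, hcdf]
    have : ((i0 : ℕ) + 1) = 1 := by simp [i0]
    rw [this, pow_one, ENNReal.ofReal_sub 1 ht0, ENNReal.ofReal_one]
  -- Markov
  have hterm2 : μ {ω | (k : ℝ≥0∞) ≤ f ω} ≤ ENNReal.ofReal (1 / (1 - t)) / k := by
    have hmarkov := mul_meas_ge_le_lintegral₀ (μ := μ) hf.aemeasurable (k : ℝ≥0∞)
    have hlin : ∫⁻ ω, f ω ∂μ = ∑ j ∈ Finset.univ.erase i0, μ (B j) := by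
      rw [hfdef]
      rw [lintegral_finset_sum _ (fun j _ => measurable_one.indicator (hB j))]
      exact Finset.sum_congr rfl fun j _ => lintegral_indicator_one (hB j)
    have hμB : ∀ j ∈ Finset.univ.erase i0, μ (B j) = ENNReal.ofReal (t ^ ((j : ℕ) + 1)) :=
      fun j _ => h.cdf j t ⟨ht0, le_of_lt ht1⟩
    have hsum : ∑ j ∈ Finset.univ.erase i0, μ (B j) ≤ ENNReal.ofReal (1 / (1 - t)) := by
      rw [Finset.sum_congr rfl hμB, ← ENNReal.ofReal_sum_of_nonneg
        (fun j _ => pow_nonneg ht0 _)]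
      apply ENNReal.ofReal_le_ofReal
      calc ∑ j ∈ Finset.univ.erase i0, t ^ ((j : ℕ) + 1)
          ≤ ∑ j : Fin n, t ^ ((j : ℕ) + 1) :=
            Finset.sum_le_sum_of_subset_of_nonneg (Finset.erase_subset _ _)
              (fun j _ _ => pow_nonneg ht0 _)
        _ = ∑ m ∈ Finset.range n, t ^ (m + 1) := Fin.sum_univ_eq_sum_range (fun m => t ^ (m + 1)) n
        _ ≤ ∑ m ∈ Finset.range (n + 1), t ^ m := by
            rw [Finset.sum_range_succ' (fun m => t ^ m) n]
            simp [pow_nonneg ht0]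
        _ ≤ 1 / (1 - t) := by
            have hgeom : ∑ m ∈ Finset.range (n + 1), t ^ m
                = (1 - t ^ (n + 1)) / (1 - t) := by
              rw [geom_sum_eq (ne_of_lt ht1)]
              rw [div_eq_div_iff (by linarith) (by linarith)]
              ring
            rw [hgeom]
            gcongr
            · nlinarith [pow_nonneg ht0 (n + 1)]
    have hk0 : (k : ℝ≥0∞) ≠ 0 := by exact_mod_cast hk.ne'
    rw [ENNReal.le_div_iff_mul_le (Or.inl hk0) (Or.inl (ENNReal.natCast_ne_top k)),
      mul_comm]
    exact hmarkov.trans (hlin.le.trans hsum)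
  calc μ {ω | k ≤ ((ρ ω i0 : Fin n) : ℕ)}
      ≤ μ {ω | t < Z i0 ω} + μ {ω | (k : ℝ≥0∞) ≤ f ω} := step1
    _ ≤ ENNReal.ofReal (1 - t) + ENNReal.ofReal (1 / (1 - t)) / k := by
        rw [hterm1]; exact add_le_add_right hterm2 _

lemma decomposeFin_fst {m : ℕ} (σ : Equiv.Perm (Fin (m + 1))) :
    (Equiv.Perm.decomposeFin σ).1 = σ 0 := by
  conv_rhs => rw [← Equiv.Perm.decomposeFin.symm_apply_apply σ]
  rw [← Prod.mk.eta (p := Equiv.Perm.decomposeFin σ)]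
  rw [Equiv.Perm.decomposeFin_symm_apply_zero]

lemma count_lt {m k : ℕ} :
    (Finset.univ.filter fun σ : Equiv.Perm (Fin (m + 1)) =>
      ((σ 0 : Fin (m + 1)) : ℕ) < k).card ≤ k * Nat.factorial m := by
  classical
  have h1 : (Finset.univ.filter fun σ : Equiv.Perm (Fin (m + 1)) =>
        ((σ 0 : Fin (m + 1)) : ℕ) < k).card
      = (Finset.univ.filter fun q : Fin (m + 1) × Equiv.Perm (Fin m) =>
        ((q.1 : Fin (m + 1)) : ℕ) < k).card := by
    apply Finset.card_bij' (fun σ _ => Equiv.Perm.decomposeFin σ)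
      (fun q _ => Equiv.Perm.decomposeFin.symm q)
    · intro σ hσ
      simp only [Finset.mem_filter, Finset.mem_univ, true_and] at hσ ⊢
      rw [decomposeFin_fst]; exact hσ
    · intro q hq
      simp only [Finset.mem_filter, Finset.mem_univ, true_and] at hq ⊢
      rw [← Prod.mk.eta (p := q), Equiv.Perm.decomposeFin_symm_apply_zero]
      exact hq
    · intro σ _; exact Equiv.Perm.decomposeFin.symm_apply_apply σ
    · intro q _; exact Equiv.Perm.decomposeFin.apply_symm_apply q
  rw [h1]
  have h2 : (Finset.univ.filter fun q : Fin (m + 1) × Equiv.Perm (Fin m) =>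
        ((q.1 : Fin (m + 1)) : ℕ) < k)
      = (Finset.univ.filter fun v : Fin (m + 1) => (v : ℕ) < k) ×ˢ Finset.univ := by
    ext ⟨a, b⟩; simp
  rw [h2, Finset.card_product]
  have h3 : (Finset.univ.filter fun v : Fin (m + 1) => (v : ℕ) < k).card ≤ k := by
    have := Finset.card_le_card_of_injOn
      (s := Finset.univ.filter fun v : Fin (m + 1) => (v : ℕ) < k)
      (t := Finset.range k) (fun v : Fin (m + 1) => (v : ℕ))
      (fun v hv => Finset.mem_range.2 (Finset.mem_filter.1 hv).2)
      (fun a _ b _ hab => Fin.val_injective hab)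
    simpa using this
  have h4 : Fintype.card (Equiv.Perm (Fin m)) = Nat.factorial m := by
    rw [Fintype.card_perm, Fintype.card_fin]
  calc _ ≤ k * Finset.univ.card := Nat.mul_le_mul_right _ h3
    _ = k * Nat.factorial m := by rw [Finset.card_univ, h4]

lemma half_sum_abs {α : Type*} [Fintype α] [DecidableEq α] (p u : α → ℝ)
    (hpu : ∑ x, p x = ∑ x, u x) (A : Finset α) :
    ∑ x ∈ A, (p x - u x) ≤ (1 / 2) * ∑ x, |p x - u x| := by
  have h0 : ∑ x ∈ A, (p x - u x) + ∑ x ∈ Aᶜ, (p x - u x) = 0 := by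
    rw [Finset.sum_add_sum_compl]
    rw [Finset.sum_sub_distrib, hpu, sub_self]
  have h1 : ∑ x ∈ A, (p x - u x) ≤ ∑ x ∈ A, |p x - u x| :=
    Finset.sum_le_sum fun x _ => le_abs_self _
  have h2 : -∑ x ∈ Aᶜ, (p x - u x) ≤ ∑ x ∈ Aᶜ, |p x - u x| := by
    rw [← Finset.sum_neg_distrib]
    exact Finset.sum_le_sum fun x _ => neg_le_abs _
  have h3 : ∑ x ∈ A, |p x - u x| + ∑ x ∈ Aᶜ, |p x - u x| = ∑ x, |p x - u x| :=
    Finset.sum_add_sum_compl _ _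
  linarith

lemma sum_p {n : ℕ} {Ω : Type*} [MeasurableSpace Ω] {μ : Measure Ω}
    {Z : Fin n → Ω → ℝ} {ρ : Ω → Equiv.Perm (Fin n)} (h : IsInverseUnfair μ Z ρ) :
    ∑ σ : Equiv.Perm (Fin n), (μ {ω | ρ ω = σ}).toReal = 1 := by
  haveI := h.prob
  have h1 := meas_mem_finset (μ := μ) h.rhoMeas Finset.univ
  have h2 : {ω | ρ ω ∈ Finset.univ} = (Set.univ : Set Ω) := by ext ω; simp
  rw [h2, measure_univ] at h1
  rw [← ENNReal.toReal_sum (fun σ _ => measure_ne_top μ _), ← h1, ENNReal.toReal_one]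

lemma sum_p_finset {n : ℕ} {Ω : Type*} [MeasurableSpace Ω] {μ : Measure Ω}
    {Z : Fin n → Ω → ℝ} {ρ : Ω → Equiv.Perm (Fin n)} (h : IsInverseUnfair μ Z ρ)
    (S : Finset (Equiv.Perm (Fin n))) :
    ∑ σ ∈ S, (μ {ω | ρ ω = σ}).toReal = (μ {ω | ρ ω ∈ S}).toReal := by
  haveI := h.prob
  rw [meas_mem_finset (μ := μ) h.rhoMeas S, ENNReal.toReal_sum (fun σ _ => measure_ne_top μ _)]

/-- Main lower bound on the TV sum. -/
lemma lower_bound {n : ℕ} (hn : 0 < n) {Ω : Type*} [MeasurableSpace Ω]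
    {μ : Measure Ω} {Z : Fin n → Ω → ℝ} {ρ : Ω → Equiv.Perm (Fin n)}
    (h : IsInverseUnfair μ Z ρ) (r : ℕ) (hr : 0 < r) :
    1 - 2 / (r : ℝ) - (r : ℝ) ^ 2 / n ≤ (1 / 2 : ℝ) *
      ∑ σ : Equiv.Perm (Fin n), |(μ {ω | ρ ω = σ}).toReal - 1 / (Nat.factorial n : ℝ)| := by
  classical
  haveI := h.prob
  obtain ⟨m, rfl⟩ := Nat.exists_eq_succ_of_ne_zero hn.ne'
  have hrR : (1 : ℝ) ≤ (r : ℝ) := by exact_mod_cast hr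
  set k : ℕ := r ^ 2 with hkdef
  have hk : 0 < k := pow_pos hr 2
  set t : ℝ := 1 - 1 / (r : ℝ) with htdef
  have ht0 : 0 ≤ t := by
    rw [htdef]
    have : 1 / (r : ℝ) ≤ 1 := by
      rw [div_le_one (by linarith)]; exact hrR
    linarith
  have ht1 : t < 1 := by
    rw [htdef]
    have : 0 < 1 / (r : ℝ) := by positivity
    linarith
  have h1t : 1 - t = 1 / (r : ℝ) := by rw [htdef]; ring
  set i0 : Fin (m + 1) := ⟨0, hn⟩ with hi0
  set p : Equiv.Perm (Fin (m + 1)) → ℝ := fun σ => (μ {ω | ρ ω = σ}).toReal with hp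
  set u : ℝ := 1 / (Nat.factorial (m + 1) : ℝ) with hu
  set A : Finset (Equiv.Perm (Fin (m + 1))) :=
    Finset.univ.filter fun σ => ((σ i0 : Fin (m + 1)) : ℕ) < k with hA
  -- the epsilon bound
  have heps : ENNReal.ofReal (1 - t) + ENNReal.ofReal (1 / (1 - t)) / k
      = ENNReal.ofReal (2 / (r : ℝ)) := by
    have hrpos : (0 : ℝ) < (r : ℝ) := by linarith
    have hkpos : (0 : ℝ) < (k : ℝ) := by exact_mod_cast hk
    rw [h1t, one_div_one_div, ← ENNReal.ofReal_natCast k,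
      ← ENNReal.ofReal_div_of_pos hkpos,
      ← ENNReal.ofReal_add (by positivity) (by positivity)]
    congr 1
    rw [hkdef]
    push_cast
    field_simp
    ring
  have htail := tail_bound hn h k hk t ht0 ht1
  rw [heps] at htail
  -- sum over complement of A
  have hAc : ∑ σ ∈ Aᶜ, p σ ≤ 2 / (r : ℝ) := by
    have hset : {ω | ρ ω ∈ Aᶜ} = {ω | k ≤ ((ρ ω i0 : Fin (m + 1)) : ℕ)} := by
      ext ω
      simp [hA, not_lt]
    rw [hp]
    simp only
    rw [sum_p_finset h Aᶜ, hset]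
    exact ENNReal.toReal_le_of_le_ofReal (by positivity) htail
  have hApsum : 1 - 2 / (r : ℝ) ≤ ∑ σ ∈ A, p σ := by
    have := Finset.sum_add_sum_compl A p
    rw [sum_p h] at this
    linarith
  -- sum of u over A
  have hAu : ∑ σ ∈ A, u ≤ (r : ℝ) ^ 2 / (m + 1 : ℝ) := by
    rw [Finset.sum_const, nsmul_eq_mul]
    have hcard : A.card ≤ k * Nat.factorial m := by
      have : i0 = 0 := rfl
      rw [hA, this]
      exact count_lt
    have hfact : (Nat.factorial (m + 1) : ℝ) = (m + 1 : ℝ) * (Nat.factorial m : ℝ) := by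
      rw [Nat.factorial_succ]; push_cast; ring
    have hfm : (0 : ℝ) < (Nat.factorial m : ℝ) := by
      exact_mod_cast Nat.factorial_pos m
    have hm1 : (0 : ℝ) < (m + 1 : ℝ) := by positivity
    calc (A.card : ℝ) * u ≤ (k * Nat.factorial m : ℕ) * u := by
          apply mul_le_mul_of_nonneg_right _ (by rw [hu]; positivity)
          exact_mod_cast hcard
      _ = (r : ℝ) ^ 2 * (Nat.factorial m : ℝ) / ((m + 1 : ℝ) * (Nat.factorial m : ℝ)) := by
          rw [hu, hfact]; push_cast [hkdef]; ring
      _ = (r : ℝ) ^ 2 / (m + 1 : ℝ) := by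
          rw [mul_div_mul_right _ _ (ne_of_gt hfm)]
  -- half sum bound
  have hhalf : ∑ σ ∈ A, (p σ - u) ≤ (1 / 2 : ℝ) * ∑ σ, |p σ - u| := by
    apply half_sum_abs
    rw [sum_p h, Finset.sum_const, nsmul_eq_mul, Finset.card_univ, hu]
    rw [Fintype.card_perm, Fintype.card_fin]
    field_simp
  have hcast : ((m + 1 : ℕ) : ℝ) = (m + 1 : ℝ) := by push_cast; ring
  calc 1 - 2 / (r : ℝ) - (r : ℝ) ^ 2 / ((m + 1 : ℕ) : ℝ)
      ≤ ∑ σ ∈ A, p σ - ∑ σ ∈ A, u := by rw [hcast]; linarith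
    _ = ∑ σ ∈ A, (p σ - u) := by rw [Finset.sum_sub_distrib]
    _ ≤ (1 / 2 : ℝ) * ∑ σ, |p σ - u| := hhalf

lemma upper_bound {n : ℕ} {Ω : Type*} [MeasurableSpace Ω] {μ : Measure Ω}
    {Z : Fin n → Ω → ℝ} {ρ : Ω → Equiv.Perm (Fin n)} (h : IsInverseUnfair μ Z ρ) :
    (1 / 2 : ℝ) * ∑ σ : Equiv.Perm (Fin n),
      |(μ {ω | ρ ω = σ}).toReal - 1 / (Nat.factorial n : ℝ)| ≤ 1 := by
  have hu0 : (0 : ℝ) ≤ 1 / (Nat.factorial n : ℝ) := by positivity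
  have hsumu : ∑ _σ : Equiv.Perm (Fin n), (1 / (Nat.factorial n : ℝ)) = 1 := by
    rw [Finset.sum_const, nsmul_eq_mul, Finset.card_univ, Fintype.card_perm,
      Fintype.card_fin]
    field_simp
  have h1 : ∑ σ : Equiv.Perm (Fin n),
      |(μ {ω | ρ ω = σ}).toReal - 1 / (Nat.factorial n : ℝ)| ≤ 2 := by
    calc ∑ σ : Equiv.Perm (Fin n),
        |(μ {ω | ρ ω = σ}).toReal - 1 / (Nat.factorial n : ℝ)|
        ≤ ∑ σ : Equiv.Perm (Fin n),
          ((μ {ω | ρ ω = σ}).toReal + 1 / (Nat.factorial n : ℝ)) := by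
          apply Finset.sum_le_sum
          intro σ _
          rw [abs_sub_le_iff]
          constructor
          · nlinarith [ENNReal.toReal_nonneg (a := μ {ω | ρ ω = σ})]
          · nlinarith [ENNReal.toReal_nonneg (a := μ {ω | ρ ω = σ})]
      _ = 2 := by rw [Finset.sum_add_distrib, sum_p h, hsumu]; norm_num
  linarith

lemma nat_sqrt_atTop : Tendsto Nat.sqrt atTop atTop :=
  tendsto_atTop_atTop.2 fun b => ⟨b * b, fun _ ha => Nat.le_sqrt.2 ha⟩

lemma real_sqrt_nat_atTop : Tendsto (fun n : ℕ => Real.sqrt n) atTop atTop := by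
  refine tendsto_atTop_atTop.2 fun b => ⟨⌈b * b⌉₊, fun a ha => ?_⟩
  have h1 : b * b ≤ (a : ℝ) := le_trans (Nat.le_ceil _) (by exact_mod_cast ha)
  calc b ≤ |b| := le_abs_self b
    _ = Real.sqrt (b * b) := (Real.sqrt_mul_self_eq_abs b).symm
    _ ≤ Real.sqrt a := Real.sqrt_le_sqrt h1

/-- The total variation distance between the law of the inverse-unfair
permutation `ρ_n` and the uniform distribution on `S_n` converges to `1` as
`n → ∞`.  (Here `d_TV = (1/2) Σ_σ |P(ρ_n = σ) - 1/n!|`.) -/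
theorem stmt_7 (Ω : ℕ → Type*) [∀ n, MeasurableSpace (Ω n)]
    (μ : ∀ n, Measure (Ω n)) (Z : ∀ n, Fin n → Ω n → ℝ)
    (ρ : ∀ n, Ω n → Equiv.Perm (Fin n))
    (h : ∀ n, IsInverseUnfair (μ n) (Z n) (ρ n)) :
    Tendsto (fun n => (1 / 2 : ℝ) * ∑ σ : Equiv.Perm (Fin n),
        |(μ n {ω | ρ n ω = σ}).toReal - 1 / (Nat.factorial n : ℝ)|)
      atTop (𝓝 1) := by
  have hg : Tendsto (fun n : ℕ =>
      1 - 2 / ((Nat.sqrt (Nat.sqrt n) : ℝ)) - 1 / Real.sqrt n) atTop (𝓝 1) := by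
    have t1 : Tendsto (fun n : ℕ => ((Nat.sqrt (Nat.sqrt n) : ℕ) : ℝ)) atTop atTop :=
      tendsto_natCast_atTop_atTop.comp (nat_sqrt_atTop.comp nat_sqrt_atTop)
    have t2 : Tendsto (fun n : ℕ => 2 / ((Nat.sqrt (Nat.sqrt n) : ℝ))) atTop (𝓝 0) :=
      Tendsto.div_atTop tendsto_const_nhds t1
    have t3 : Tendsto (fun n : ℕ => 1 / Real.sqrt n) atTop (𝓝 0) :=
      Tendsto.div_atTop tendsto_const_nhds real_sqrt_nat_atTop
    have := ((tendsto_const_nhds (x := (1 : ℝ)) (f := atTop)).sub t2).sub t3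
    simpa using this
  apply tendsto_of_tendsto_of_tendsto_of_le_of_le' hg tendsto_const_nhds
  · filter_upwards [eventually_ge_atTop 1] with n hn1
    have hn : 0 < n := hn1
    have hr : 0 < Nat.sqrt (Nat.sqrt n) := Nat.sqrt_pos.2 (Nat.sqrt_pos.2 hn)
    have hlb := lower_bound hn (h n) (Nat.sqrt (Nat.sqrt n)) hr
    have hnR : (0 : ℝ) < (n : ℝ) := by exact_mod_cast hn
    have hs : 0 < Real.sqrt n := Real.sqrt_pos.2 hnR
    have h1 : ((Nat.sqrt (Nat.sqrt n) : ℝ)) ^ 2 ≤ (Nat.sqrt n : ℝ) := by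
      exact_mod_cast Nat.sqrt_le' (Nat.sqrt n)
    have h2 : (Nat.sqrt n : ℝ) ≤ Real.sqrt n := Real.nat_sqrt_le_real_sqrt
    have h3 : Real.sqrt n * Real.sqrt n = (n : ℝ) := Real.mul_self_sqrt hnR.le
    have h4 : ((Nat.sqrt (Nat.sqrt n) : ℝ)) ^ 2 / (n : ℝ) ≤ 1 / Real.sqrt n := by
      rw [div_le_div_iff₀ hnR hs]
      nlinarith [mul_le_mul_of_nonneg_right (h1.trans h2) hs.le]
    linarith
  · exact Eventually.of_forall fun n => upper_bound (h n)
end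

section
/- The total variation distance between the law of the unfair permutation γ_n and the uniform distribution on S_n converges to 1 as n → ∞. -/
open MeasureTheory ProbabilityTheory Filter
open scoped ENNReal NNReal Topology

section G1
open Set


noncomputable def modelM (k : ℕ) : Measure ℝ :=
  Measure.map (fun u : ℝ => u ^ ((k : ℝ)⁻¹)) (volume.restrict (Set.Ioc (0:ℝ) 1))

lemma measurable_rpowInv (k : ℕ) : Measurable (fun u : ℝ => u ^ ((k : ℝ)⁻¹)) :=
  (Real.continuous_rpow_const (by positivity)).measurable

instance volIoc_prob : IsProbabilityMeasure (volume.restrict (Set.Ioc (0:ℝ) 1)) := by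
  constructor
  simp [Real.volume_Ioc]

instance modelM_prob (k : ℕ) : IsProbabilityMeasure (modelM k) :=
  Measure.isProbabilityMeasure_map (measurable_rpowInv k).aemeasurable

lemma modelM_Iic (k : ℕ) (hk : 1 ≤ k) (t : ℝ) :
    modelM k (Set.Iic t) =
      if t < 0 then 0 else ENNReal.ofReal (min (t ^ k) 1) := by
  have hk' : (0:ℝ) < (k:ℝ) := by exact_mod_cast hk
  rw [modelM, Measure.map_apply (measurable_rpowInv k) measurableSet_Iic,
    Measure.restrict_apply ((measurable_rpowInv k) measurableSet_Iic)]
  by_cases ht : t < 0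
  · rw [if_pos ht]
    convert measure_empty
    · ext u
      simp only [mem_inter_iff, mem_preimage, mem_Iic, mem_Ioc, mem_empty_iff_false, iff_false,
        not_and]
      intro hle hu0 _
      exact absurd (lt_of_lt_of_le (Real.rpow_pos_of_pos hu0 _) hle) (not_lt.mpr ht.le)
    · infer_instance
  · push_neg at ht
    rw [if_neg (not_lt.mpr ht)]
    have hset : (fun u : ℝ => u ^ ((k : ℝ)⁻¹)) ⁻¹' Set.Iic t ∩ Set.Ioc 0 1
        = Set.Ioc 0 (min (t ^ k) 1) := by
      ext u
      simp only [mem_inter_iff, mem_preimage, mem_Iic, mem_Ioc, le_min_iff]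
      constructor
      · rintro ⟨hle, hu0, hu1⟩
        have := (Real.rpow_inv_le_iff_of_pos (le_of_lt hu0) ht hk').mp hle
        rw [Real.rpow_natCast] at this
        exact ⟨hu0, this, hu1⟩
      · rintro ⟨hu0, htk, hu1⟩
        refine ⟨?_, hu0, hu1⟩
        rw [Real.rpow_inv_le_iff_of_pos (le_of_lt hu0) ht hk', Real.rpow_natCast]
        exact htk
    rw [hset, Real.volume_Ioc, sub_zero]




variable {n : ℕ} {Ω : Type*} [MeasurableSpace Ω] {μ : Measure Ω} {Z : Fin n → Ω → ℝ}
  {ρ : Ω → Equiv.Perm (Fin n)}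

lemma law_eq (H : IsInverseUnfair μ Z ρ) (i : Fin n) :
    Measure.map (Z i) μ = modelM ((i : ℕ) + 1) := by
  haveI := H.prob
  haveI : IsProbabilityMeasure (Measure.map (Z i) μ) :=
    Measure.isProbabilityMeasure_map (H.meas i).aemeasurable
  refine MeasureTheory.Measure.ext_of_Iic _ _ (fun t => ?_)
  rw [Measure.map_apply (H.meas i) measurableSet_Iic, modelM_Iic _ (by omega)]
  have hsets : (Z i ⁻¹' Set.Iic t) = {ω | Z i ω ≤ t} := rfl
  rw [hsets]
  rcases lt_or_ge t 0 with ht | ht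
  · rw [if_pos ht]
    refine le_antisymm ?_ (zero_le)
    have h0 : μ {ω | Z i ω ≤ (0:ℝ)} = 0 := by
      rw [H.cdf i 0 (by constructor <;> norm_num)]
      simp
    calc μ {ω | Z i ω ≤ t} ≤ μ {ω | Z i ω ≤ (0:ℝ)} :=
          measure_mono (fun ω hω => le_trans hω ht.le)
      _ = 0 := h0
  · rw [if_neg (not_lt.mpr ht)]
    rcases le_or_gt t 1 with ht1 | ht1
    · rw [H.cdf i t ⟨ht, ht1⟩, min_eq_left (pow_le_one₀ ht ht1)]
    · rw [min_eq_right (one_le_pow₀ ht1.le)]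
      refine le_antisymm ?_ ?_
      · refine le_trans (measure_mono (subset_univ _)) ?_
        simp [measure_univ]
      · calc (ENNReal.ofReal 1 : ℝ≥0∞) = μ {ω | Z i ω ≤ (1:ℝ)} := by
              rw [H.cdf i 1 (by constructor <;> norm_num)]; simp
          _ ≤ μ {ω | Z i ω ≤ t} := measure_mono (fun ω hω => le_trans hω ht1.le)


lemma model_integral (a b : ℕ) (ha : 1 ≤ a) (hb : 1 ≤ b) :
    ((volume.restrict (Set.Ioc (0:ℝ) 1)).prod (volume.restrict (Set.Ioc (0:ℝ) 1)))
      {p : ℝ × ℝ | p.1 ^ ((a:ℝ)⁻¹) < p.2 ^ ((b:ℝ)⁻¹)}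
      = ENNReal.ofReal ((b : ℝ) / ((a : ℝ) + b)) := by
  have ha' : (0:ℝ) < a := by exact_mod_cast ha
  have hb' : (0:ℝ) < b := by exact_mod_cast hb
  set r : ℝ := (b : ℝ) / (a : ℝ) with hr
  have hr0 : 0 ≤ r := by positivity
  have hma : Measurable (fun u : ℝ => u ^ ((a:ℝ)⁻¹)) :=
    (Real.continuous_rpow_const (by positivity)).measurable
  have hmb : Measurable (fun u : ℝ => u ^ ((b:ℝ)⁻¹)) :=
    (Real.continuous_rpow_const (by positivity)).measurable
  have hmeas : MeasurableSet {p : ℝ × ℝ | p.1 ^ ((a:ℝ)⁻¹) < p.2 ^ ((b:ℝ)⁻¹)} :=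
    measurableSet_lt (hma.comp measurable_fst) (hmb.comp measurable_snd)
  rw [Measure.prod_apply hmeas]
  have hinner : ∀ u ∈ Set.Ioc (0:ℝ) 1,
      (volume.restrict (Set.Ioc (0:ℝ) 1))
        (Prod.mk u ⁻¹' {p : ℝ × ℝ | p.1 ^ ((a:ℝ)⁻¹) < p.2 ^ ((b:ℝ)⁻¹)})
        = ENNReal.ofReal (1 - u ^ r) := by
    intro u hu
    have hu0 : 0 < u := hu.1
    have hur1 : u ^ r ≤ 1 := Real.rpow_le_one hu0.le hu.2 hr0
    have hur0 : 0 < u ^ r := Real.rpow_pos_of_pos hu0 r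
    rw [Measure.restrict_apply (hmeas.preimage measurable_prodMk_left)]
    have hset : Prod.mk u ⁻¹' {p : ℝ × ℝ | p.1 ^ ((a:ℝ)⁻¹) < p.2 ^ ((b:ℝ)⁻¹)}
        ∩ Set.Ioc 0 1 = Set.Ioc (u ^ r) 1 := by
      ext v
      simp only [mem_inter_iff, mem_preimage, mem_setOf_eq, mem_Ioc]
      constructor
      · rintro ⟨hlt, hv0, hv1⟩
        rw [Real.lt_rpow_inv_iff_of_pos (by positivity) hv0.le hb'] at hlt
        rw [← Real.rpow_mul hu0.le] at hlt
        have : (a:ℝ)⁻¹ * b = r := by rw [hr]; field_simp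
        rw [this] at hlt
        exact ⟨hlt, hv1⟩
      · rintro ⟨hlt, hv1⟩
        have hv0 : 0 < v := lt_trans hur0 hlt
        refine ⟨?_, hv0, hv1⟩
        rw [Real.lt_rpow_inv_iff_of_pos (by positivity) hv0.le hb']
        rw [← Real.rpow_mul hu0.le]
        have : (a:ℝ)⁻¹ * b = r := by rw [hr]; field_simp
        rw [this]
        exact hlt
    rw [hset, Real.volume_Ioc]
  rw [setLIntegral_congr_fun measurableSet_Ioc
    hinner]
  have hintg : IntegrableOn (fun u : ℝ => 1 - u ^ r) (Set.Ioc (0:ℝ) 1) volume := by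
    have h1 : IntegrableOn (fun _ : ℝ => (1:ℝ)) (Set.Ioc (0:ℝ) 1) volume :=
      integrableOn_const (by simp [Real.volume_Ioc])
    have h2 : IntegrableOn (fun u : ℝ => u ^ r) (Set.Ioc (0:ℝ) 1) volume :=
      (intervalIntegral.intervalIntegrable_rpow (by left; exact hr0)).1
    exact h1.sub h2
  have hnonneg : ∀ᵐ u ∂(volume.restrict (Set.Ioc (0:ℝ) 1)), 0 ≤ 1 - u ^ r := by
    rw [ae_restrict_iff' measurableSet_Ioc]
    filter_upwards with u hu
    simp only [sub_nonneg]
    exact Real.rpow_le_one hu.1.le hu.2 hr0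
  rw [← ofReal_integral_eq_lintegral_ofReal hintg hnonneg]
  congr 1
  rw [← intervalIntegral.integral_of_le zero_le_one]
  rw [intervalIntegral.integral_sub intervalIntegrable_const
    (intervalIntegral.intervalIntegrable_rpow (by left; exact hr0))]
  rw [intervalIntegral.integral_const, integral_rpow (by left; linarith)]
  rw [Real.one_rpow, Real.zero_rpow (by positivity)]
  have hra : r + 1 = ((a:ℝ) + b) / a := by rw [hr]; field_simp; ring
  rw [hra]
  field_simp
  simp







variable {n : ℕ} {Ω : Type*} [MeasurableSpace Ω] {μ : Measure Ω} {Z : Fin n → Ω → ℝ}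
  {ρ : Ω → Equiv.Perm (Fin n)}

lemma prob_lt (H : IsInverseUnfair μ Z ρ) (i j : Fin n) (hij : i ≠ j) :
    μ {ω | Z i ω < Z j ω}
      = ENNReal.ofReal (((j:ℕ) + 1 : ℝ) / ((i:ℕ) + (j:ℕ) + 2)) := by
  haveI := H.prob
  have hind : IndepFun (Z i) (Z j) μ := H.indep.indepFun hij
  have hmap : Measure.map (fun ω => (Z i ω, Z j ω)) μ
      = (Measure.map (Z i) μ).prod (Measure.map (Z j) μ) :=
    (indepFun_iff_map_prod_eq_prod_map_map (H.meas i).aemeasurable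
      (H.meas j).aemeasurable).mp hind
  have hlt : MeasurableSet {p : ℝ × ℝ | p.1 < p.2} :=
    measurableSet_lt measurable_fst measurable_snd
  have h1 : μ {ω | Z i ω < Z j ω}
      = Measure.map (fun ω => (Z i ω, Z j ω)) μ {p : ℝ × ℝ | p.1 < p.2} := by
    rw [Measure.map_apply ((H.meas i).prodMk (H.meas j)) hlt]
    rfl
  rw [h1, hmap, law_eq H i, law_eq H j, modelM, modelM,
    Measure.map_prod_map _ _ (measurable_rpowInv _) (measurable_rpowInv _),
    Measure.map_apply ((measurable_rpowInv _).prodMap (measurable_rpowInv _)) hlt]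
  have hpre : Prod.map (fun u : ℝ => u ^ ((((i:ℕ)+1 : ℕ) : ℝ)⁻¹))
      (fun u : ℝ => u ^ ((((j:ℕ)+1 : ℕ) : ℝ)⁻¹)) ⁻¹' {p : ℝ × ℝ | p.1 < p.2}
      = {p : ℝ × ℝ | p.1 ^ ((((i:ℕ)+1 : ℕ) : ℝ)⁻¹) < p.2 ^ ((((j:ℕ)+1 : ℕ) : ℝ)⁻¹)} := rfl
  rw [hpre, model_integral _ _ (by omega) (by omega)]
  congr 1
  push_cast
  ring_nf

end G1

section G2
open Finset

variable {n : ℕ}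

lemma swap_card_eq (i j : Fin n) (C : Equiv.Perm (Fin n) → Prop) [DecidablePred C]
    (hC : ∀ τ : Equiv.Perm (Fin n), C (τ * Equiv.swap i j) ↔ C τ) :
    (univ.filter (fun τ : Equiv.Perm (Fin n) => τ i < τ j ∧ C τ)).card
      = (univ.filter (fun τ : Equiv.Perm (Fin n) => τ j < τ i ∧ C τ)).card := by
  apply Finset.card_bij' (fun τ _ => τ * Equiv.swap i j) (fun τ _ => τ * Equiv.swap i j)
  · intro τ hτ
    simp only [mem_filter, mem_univ, true_and] at hτ ⊢
    refine ⟨?_, (hC τ).mpr hτ.2⟩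
    simp [Equiv.Perm.mul_apply, Equiv.swap_apply_left, Equiv.swap_apply_right, hτ.1]
  · intro τ hτ
    simp only [mem_filter, mem_univ, true_and] at hτ ⊢
    refine ⟨?_, (hC τ).mpr hτ.2⟩
    simp [Equiv.Perm.mul_apply, Equiv.swap_apply_left, Equiv.swap_apply_right, hτ.1]
  · intro τ _
    simp [mul_assoc]
  · intro τ _
    simp [mul_assoc]

lemma not_lt_filter (i j : Fin n) (hij : i ≠ j) (s : Finset (Equiv.Perm (Fin n))) :
    s.filter (fun τ => ¬ τ i < τ j) = s.filter (fun τ => τ j < τ i) := by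
  apply Finset.filter_congr
  intro τ _
  constructor
  · intro hle
    push_neg at hle
    exact lt_of_le_of_ne hle (fun he => hij (τ.injective he.symm))
  · intro hlt
    exact not_lt.mpr hlt.le

lemma card_lt_one (i j : Fin n) (hij : i ≠ j) :
    ((univ.filter (fun τ : Equiv.Perm (Fin n) => τ i < τ j)).card : ℝ)
      = (Nat.factorial n : ℝ) / 2 := by
  have key := swap_card_eq i j (fun _ => True) (fun τ => Iff.rfl)
  simp only [and_true] at key
  have hA := Finset.card_filter_add_card_filter_not
    (s := (univ : Finset (Equiv.Perm (Fin n)))) (p := fun τ => τ i < τ j)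
  rw [not_lt_filter i j hij] at hA
  rw [← key] at hA
  rw [Finset.card_univ, Fintype.card_perm, Fintype.card_fin] at hA
  have := congrArg (fun x : ℕ => (x : ℝ)) hA
  push_cast at this
  linarith

lemma card_lt_two (i j k l : Fin n) (hij : i ≠ j) (hkl : k ≠ l)
    (hik : i ≠ k) (hil : i ≠ l) (hjk : j ≠ k) (hjl : j ≠ l) :
    ((univ.filter (fun τ : Equiv.Perm (Fin n) => τ i < τ j ∧ τ k < τ l)).card : ℝ)
      = (Nat.factorial n : ℝ) / 4 := by
  have key := swap_card_eq i j (fun τ => τ k < τ l) (fun τ => by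
    simp [Equiv.Perm.mul_apply, Equiv.swap_apply_of_ne_of_ne (Ne.symm hik) (Ne.symm hjk),
      Equiv.swap_apply_of_ne_of_ne (Ne.symm hil) (Ne.symm hjl)])
  have hA := Finset.card_filter_add_card_filter_not
    (s := univ.filter (fun τ : Equiv.Perm (Fin n) => τ k < τ l)) (p := fun τ => τ i < τ j)
  rw [not_lt_filter i j hij] at hA
  rw [Finset.filter_filter, Finset.filter_filter] at hA
  have e1 : (univ.filter (fun τ : Equiv.Perm (Fin n) => τ k < τ l ∧ τ i < τ j))
      = univ.filter (fun τ : Equiv.Perm (Fin n) => τ i < τ j ∧ τ k < τ l) := by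
    apply Finset.filter_congr; intro τ _; exact and_comm
  have e2 : (univ.filter (fun τ : Equiv.Perm (Fin n) => τ k < τ l ∧ τ j < τ i))
      = univ.filter (fun τ : Equiv.Perm (Fin n) => τ j < τ i ∧ τ k < τ l) := by
    apply Finset.filter_congr; intro τ _; exact and_comm
  rw [e1, e2, ← key] at hA
  have hc := card_lt_one k l hkl (n := n)
  have := congrArg (fun x : ℕ => (x : ℝ)) hA
  push_cast at this
  linarith


def idx1 (n : ℕ) (hn : 0 < n) (k : ℕ) : Fin n := ⟨k % n, Nat.mod_lt k hn⟩
def idx2 (n : ℕ) (hn : 0 < n) (k : ℕ) : Fin n := ⟨(n - 1 - k) % n, Nat.mod_lt _ hn⟩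

noncomputable def Xu (n : ℕ) (hn : 0 < n) (τ : Equiv.Perm (Fin n)) : ℝ :=
  ∑ k ∈ Finset.range (n / 2), if τ (idx1 n hn k) < τ (idx2 n hn k) then (1:ℝ) else 0

lemma idx1_val {n : ℕ} (hn : 0 < n) {k : ℕ} (hk : k < n / 2) :
    (idx1 n hn k : ℕ) = k := by
  simp only [idx1]
  exact Nat.mod_eq_of_lt (by omega)

lemma idx2_val {n : ℕ} (hn : 0 < n) {k : ℕ} (hk : k < n / 2) :
    (idx2 n hn k : ℕ) = n - 1 - k := by
  simp only [idx2]
  exact Nat.mod_eq_of_lt (by omega)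

lemma idx_ne {n : ℕ} (hn : 0 < n) {k : ℕ} (hk : k < n / 2) :
    idx1 n hn k ≠ idx2 n hn k := by
  refine Fin.ne_of_val_ne ?_
  rw [idx1_val hn hk, idx2_val hn hk]
  omega

lemma idx_ne' {n : ℕ} (hn : 0 < n) {k l : ℕ} (hk : k < n / 2) (hl : l < n / 2) (hkl : k ≠ l) :
    idx1 n hn k ≠ idx1 n hn l ∧ idx1 n hn k ≠ idx2 n hn l ∧
    idx2 n hn k ≠ idx1 n hn l ∧ idx2 n hn k ≠ idx2 n hn l := by
  refine ⟨Fin.ne_of_val_ne ?_, Fin.ne_of_val_ne ?_, Fin.ne_of_val_ne ?_, Fin.ne_of_val_ne ?_⟩ <;>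
    simp only [idx1_val hn hk, idx2_val hn hk, idx1_val hn hl, idx2_val hn hl] <;> omega

lemma idx_ne'' {n : ℕ} (hn : 0 < n) {k l : ℕ} (hk : k < n / 2) (hl : l < n / 2) (hkl : k ≠ l) :
    idx1 n hn k ≠ idx1 n hn l ∧ idx1 n hn k ≠ idx2 n hn l ∧
    idx2 n hn k ≠ idx1 n hn l ∧ idx2 n hn k ≠ idx2 n hn l := idx_ne' hn hk hl hkl

lemma sum_Xu (n : ℕ) (hn : 0 < n) :
    ∑ τ : Equiv.Perm (Fin n), Xu n hn τ
      = (Nat.factorial n : ℝ) * (n / 2 : ℕ) / 2 := by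
  unfold Xu
  rw [Finset.sum_comm]
  have : ∀ k ∈ Finset.range (n / 2),
      (∑ τ : Equiv.Perm (Fin n), if τ (idx1 n hn k) < τ (idx2 n hn k) then (1:ℝ) else 0)
        = (Nat.factorial n : ℝ) / 2 := by
    intro k hk
    rw [Finset.sum_boole]
    exact card_lt_one _ _ (idx_ne hn (Finset.mem_range.mp hk))
  rw [Finset.sum_congr rfl this, Finset.sum_const, Finset.card_range, nsmul_eq_mul]
  ring

lemma sum_Xu_sq (n : ℕ) (hn : 0 < n) :
    ∑ τ : Equiv.Perm (Fin n), (Xu n hn τ)^2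
      = (Nat.factorial n : ℝ) *
        ((n / 2 : ℕ) * ((n / 2 : ℕ) - 1) / 4 + (n / 2 : ℕ) / 2) := by
  have expand : ∀ τ : Equiv.Perm (Fin n), (Xu n hn τ)^2
      = ∑ k ∈ Finset.range (n / 2), ∑ l ∈ Finset.range (n / 2),
          (if τ (idx1 n hn k) < τ (idx2 n hn k) ∧ τ (idx1 n hn l) < τ (idx2 n hn l)
            then (1:ℝ) else 0) := by
    intro τ
    rw [sq, Xu, Finset.sum_mul_sum]
    congr 1; ext k; congr 1; ext l
    by_cases h1 : τ (idx1 n hn k) < τ (idx2 n hn k) <;>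
      by_cases h2 : τ (idx1 n hn l) < τ (idx2 n hn l) <;> simp [h1, h2]
  rw [Finset.sum_congr rfl (fun τ _ => expand τ), Finset.sum_comm]
  have inner : ∀ k ∈ Finset.range (n / 2),
      (∑ τ : Equiv.Perm (Fin n), ∑ l ∈ Finset.range (n / 2),
        (if τ (idx1 n hn k) < τ (idx2 n hn k) ∧ τ (idx1 n hn l) < τ (idx2 n hn l)
          then (1:ℝ) else 0))
      = (Nat.factorial n : ℝ) / 2 + ((n / 2 : ℕ) - 1) * ((Nat.factorial n : ℝ) / 4) := by
    intro k hk
    have hk' := Finset.mem_range.mp hk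
    rw [Finset.sum_comm]
    have hdiag : ∀ l ∈ Finset.range (n / 2),
        (∑ τ : Equiv.Perm (Fin n),
          if τ (idx1 n hn k) < τ (idx2 n hn k) ∧ τ (idx1 n hn l) < τ (idx2 n hn l)
            then (1:ℝ) else 0)
        = if l = k then (Nat.factorial n : ℝ) / 2 else (Nat.factorial n : ℝ) / 4 := by
      intro l hl
      have hl' := Finset.mem_range.mp hl
      by_cases hlk : l = k
      · subst hlk
        rw [if_pos rfl, Finset.sum_boole]
        have : (Finset.univ.filter (fun τ : Equiv.Perm (Fin n) =>
            τ (idx1 n hn l) < τ (idx2 n hn l) ∧ τ (idx1 n hn l) < τ (idx2 n hn l)))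
            = Finset.univ.filter (fun τ : Equiv.Perm (Fin n) =>
              τ (idx1 n hn l) < τ (idx2 n hn l)) := by
          apply Finset.filter_congr; intro τ _; tauto
        rw [this]
        exact card_lt_one _ _ (idx_ne hn hl')
      · rw [if_neg hlk, Finset.sum_boole]
        obtain ⟨h1, h2, h3, h4⟩ := idx_ne'' hn hk' hl' (fun h => hlk h.symm)
        exact card_lt_two _ _ _ _ (idx_ne hn hk') (idx_ne hn hl') h1 h2 h3 h4
    rw [Finset.sum_congr rfl hdiag, ← Finset.add_sum_erase _ _ hk, if_pos rfl]
    have herase : ∀ l ∈ (Finset.range (n/2)).erase k,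
        (if l = k then (Nat.factorial n : ℝ) / 2 else (Nat.factorial n : ℝ) / 4)
          = (Nat.factorial n : ℝ) / 4 := by
      intro l hl
      rw [if_neg (Finset.mem_erase.mp hl).1]
    rw [Finset.sum_congr rfl herase, Finset.sum_const, Finset.card_erase_of_mem hk,
      Finset.card_range, nsmul_eq_mul, Nat.cast_sub (by omega : 1 ≤ n / 2)]
    push_cast
    ring
  rw [Finset.sum_congr rfl inner, Finset.sum_const, Finset.card_range, nsmul_eq_mul]
  ring






lemma sum_sq_dev (n : ℕ) (hn : 0 < n) :
    ∑ τ : Equiv.Perm (Fin n), (Xu n hn τ - ((n / 2 : ℕ) : ℝ) / 2)^2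
      = (Nat.factorial n : ℝ) * (n / 2 : ℕ) / 4 := by
  have expand : ∀ τ : Equiv.Perm (Fin n),
      (Xu n hn τ - ((n / 2 : ℕ) : ℝ) / 2)^2
        = (Xu n hn τ)^2 - ((n / 2 : ℕ) : ℝ) * Xu n hn τ + (((n / 2 : ℕ) : ℝ) / 2)^2 := by
    intro τ; ring
  rw [Finset.sum_congr rfl (fun τ _ => expand τ), Finset.sum_add_distrib,
    Finset.sum_sub_distrib, ← Finset.mul_sum, sum_Xu, sum_Xu_sq, Finset.sum_const,
    Finset.card_univ, Fintype.card_perm, Fintype.card_fin, nsmul_eq_mul]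
  ring

lemma card_B_bound (n : ℕ) (hn : 0 < n) {G : ℝ} (hG : 0 < G) :
    ((univ.filter (fun τ : Equiv.Perm (Fin n) =>
        ((n / 2 : ℕ) : ℝ) / 2 + G / 2 ≤ Xu n hn τ)).card : ℝ) * (G / 2)^2
      ≤ (Nat.factorial n : ℝ) * (n / 2 : ℕ) / 4 := by
  rw [← sum_sq_dev n hn]
  calc ((univ.filter (fun τ : Equiv.Perm (Fin n) =>
        ((n / 2 : ℕ) : ℝ) / 2 + G / 2 ≤ Xu n hn τ)).card : ℝ) * (G / 2)^2
      = ∑ _τ ∈ univ.filter (fun τ : Equiv.Perm (Fin n) =>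
          ((n / 2 : ℕ) : ℝ) / 2 + G / 2 ≤ Xu n hn τ), (G / 2)^2 := by
        rw [Finset.sum_const, nsmul_eq_mul]
    _ ≤ ∑ τ ∈ univ.filter (fun τ : Equiv.Perm (Fin n) =>
          ((n / 2 : ℕ) : ℝ) / 2 + G / 2 ≤ Xu n hn τ),
            (Xu n hn τ - ((n / 2 : ℕ) : ℝ) / 2)^2 := by
        apply Finset.sum_le_sum
        intro τ hτ
        have hτ' := (Finset.mem_filter.mp hτ).2
        have h1 : G / 2 ≤ Xu n hn τ - ((n / 2 : ℕ) : ℝ) / 2 := by linarith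
        have h2 : (0:ℝ) < G / 2 := by linarith
        nlinarith
    _ ≤ ∑ τ : Equiv.Perm (Fin n), (Xu n hn τ - ((n / 2 : ℕ) : ℝ) / 2)^2 := by
        apply Finset.sum_le_sum_of_subset_of_nonneg (Finset.filter_subset _ _)
        intro τ _ _
        positivity

end G2

section G3
open Set Finset

noncomputable def Gap (n : ℕ) : ℝ :=
  ((n / 2 : ℕ) : ℝ) * ((n : ℝ) - ((n / 2 : ℕ) : ℝ)) / (2 * ((n : ℝ) + 1))

lemma mean_eq (n : ℕ) :
    ∑ k ∈ Finset.range (n / 2), ((n : ℝ) - k) / (n + 1)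
      = ((n / 2 : ℕ) : ℝ) / 2 + Gap n := by
  set m := n / 2 with hm
  have hgauss : (∑ k ∈ Finset.range m, (k:ℝ)) * 2 = (m:ℝ) * ((m:ℝ) - 1) := by
    rcases Nat.eq_zero_or_pos m with h | h
    · rw [h]; simp
    · have hh := congrArg (fun x : ℕ => (x:ℝ)) (Finset.sum_range_id_mul_two m)
      push_cast [Nat.cast_sub h] at hh
      linarith
  have hN1 : ((n:ℝ) + 1) ≠ 0 := by positivity
  have hsum : ∑ k ∈ Finset.range m, ((n : ℝ) - k) / (n + 1)
      = ((m:ℝ) * n - (∑ k ∈ Finset.range m, (k:ℝ))) / (n + 1) := by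
    rw [← Finset.sum_div]
    congr 1
    rw [Finset.sum_sub_distrib, Finset.sum_const, Finset.card_range, nsmul_eq_mul]
  rw [hsum, Gap]
  field_simp
  ring_nf
  nlinarith [hgauss]

lemma Gap_pos {n : ℕ} (hn : 2 ≤ n) : 0 < Gap n := by
  have h1 : (1:ℝ) ≤ ((n / 2 : ℕ) : ℝ) := by exact_mod_cast (by omega : 1 ≤ n / 2)
  have h2 : ((n / 2 : ℕ) : ℝ) + 1 ≤ (n : ℝ) := by exact_mod_cast (by omega : n / 2 + 1 ≤ n)
  have h3 : (0:ℝ) < (n:ℝ) + 1 := by positivity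
  rw [Gap]
  apply div_pos
  · nlinarith
  · linarith






section Prob
variable {n : ℕ} {Ω : Type*} [MeasurableSpace Ω] {μ : Measure Ω} {Z : Fin n → Ω → ℝ}
  {ρ : Ω → Equiv.Perm (Fin n)}

/-- the event for the k-th pair -/
def Ev (Z : Fin n → Ω → ℝ) (hn : 0 < n) (k : ℕ) : Set Ω :=
  {ω | Z (idx1 n hn k) ω < Z (idx2 n hn k) ω}

/-- indicator r.v. -/
noncomputable def W (Z : Fin n → Ω → ℝ) (hn : 0 < n) (k : ℕ) : Ω → ℝ :=
  (Ev Z hn k).indicator (fun _ => (1:ℝ))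

lemma Ev_meas (H : IsInverseUnfair μ Z ρ) (hn : 0 < n) (k : ℕ) :
    MeasurableSet (Ev Z hn k) :=
  measurableSet_lt (H.meas _) (H.meas _)

lemma prob_Ev (H : IsInverseUnfair μ Z ρ) (hn : 0 < n) {k : ℕ} (hk : k < n / 2) :
    μ (Ev Z hn k) = ENNReal.ofReal (((n : ℝ) - k) / (n + 1)) := by
  rw [Ev]
  rw [prob_lt H _ _ (idx_ne hn hk)]
  congr 1
  rw [idx1_val hn hk, idx2_val hn hk]
  have h1 : ((n - 1 - k : ℕ) : ℝ) = (n : ℝ) - 1 - k := by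
    push_cast [Nat.cast_sub (by omega : 1 ≤ n), Nat.cast_sub (by omega : k ≤ n - 1)]
    ring
  rw [h1]
  ring

lemma W_memL2 (H : IsInverseUnfair μ Z ρ) (hn : 0 < n) (k : ℕ) :
    MemLp (W Z hn k) 2 μ := by
  haveI := H.prob
  exact memLp_indicator_const 2 (Ev_meas H hn k) 1 (Or.inr (measure_ne_top μ _))

lemma W_integral (H : IsInverseUnfair μ Z ρ) (hn : 0 < n) (k : ℕ) :
    μ[W Z hn k] = (μ (Ev Z hn k)).toReal := by
  rw [W, integral_indicator_const (1:ℝ) (Ev_meas H hn k), smul_eq_mul, mul_one]; rfl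

lemma W_sq (hn : 0 < n) (k : ℕ) (ω : Ω) : (W Z hn k ω)^2 = W Z hn k ω := by
  rw [W, Set.indicator]
  by_cases h : ω ∈ Ev Z hn k <;> simp [h]

lemma W_variance (H : IsInverseUnfair μ Z ρ) (hn : 0 < n) (k : ℕ) :
    variance (W Z hn k) μ ≤ 1 / 4 := by
  haveI := H.prob
  rw [variance_eq_sub (W_memL2 H hn k)]
  have hsq : (fun ω => (W Z hn k ω)^2) = W Z hn k := funext (W_sq hn k)
  have h2 : μ[(W Z hn k)^2] = μ[W Z hn k] := by
    congr 1
  have hp : μ[W Z hn k] = (μ (Ev Z hn k)).toReal := W_integral H hn k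
  have hp0 : 0 ≤ (μ (Ev Z hn k)).toReal := ENNReal.toReal_nonneg
  have hp1 : (μ (Ev Z hn k)).toReal ≤ 1 := by
    rw [← ENNReal.toReal_one]
    exact ENNReal.toReal_mono ENNReal.one_ne_top prob_le_one
  rw [h2, hp]
  nlinarith [sq_nonneg ((μ (Ev Z hn k)).toReal - 1/2)]

lemma W_indep (H : IsInverseUnfair μ Z ρ) (hn : 0 < n) {k l : ℕ}
    (hk : k < n / 2) (hl : l < n / 2) (hkl : k ≠ l) :
    IndepFun (W Z hn k) (W Z hn l) μ := by
  obtain ⟨h1, h2, h3, h4⟩ := idx_ne' hn hk hl hkl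
  have hpair := H.indep.indepFun_prodMk_prodMk H.meas
    (idx1 n hn k) (idx2 n hn k) (idx1 n hn l) (idx2 n hn l) h1 h2 h3 h4
  have hg : Measurable (fun p : ℝ × ℝ => ({q : ℝ × ℝ | q.1 < q.2}).indicator
      (fun _ => (1:ℝ)) p) :=
    measurable_const.indicator (measurableSet_lt measurable_fst measurable_snd)
  exact hpair.comp hg hg

noncomputable def SW (Z : Fin n → Ω → ℝ) (hn : 0 < n) : Ω → ℝ :=
  ∑ k ∈ Finset.range (n / 2), W Z hn k

lemma SW_mean (H : IsInverseUnfair μ Z ρ) (hn : 0 < n) :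
    μ[SW Z hn] = ∑ k ∈ Finset.range (n / 2), ((n : ℝ) - k) / (n + 1) := by
  haveI := H.prob
  rw [SW]
  simp only [Finset.sum_apply]
  rw [integral_finset_sum]
  · apply Finset.sum_congr rfl
    intro k hk
    have hk' := Finset.mem_range.mp hk
    have hkn : (k:ℝ) ≤ (n:ℝ) := by exact_mod_cast (by omega : k ≤ n)
    rw [W_integral H hn k, prob_Ev H hn hk',
      ENNReal.toReal_ofReal (div_nonneg (by linarith) (by positivity))]
  · intro k _
    exact (W_memL2 H hn k).integrable one_le_two

lemma SW_variance (H : IsInverseUnfair μ Z ρ) (hn : 0 < n) :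
    variance (SW Z hn) μ ≤ ((n / 2 : ℕ) : ℝ) / 4 := by
  haveI := H.prob
  rw [SW, IndepFun.variance_sum (fun k _ => W_memL2 H hn k)]
  · calc ∑ k ∈ Finset.range (n / 2), variance (W Z hn k) μ
        ≤ ∑ _k ∈ Finset.range (n / 2), (1:ℝ)/4 :=
          Finset.sum_le_sum (fun k _ => W_variance H hn k)
      _ = ((n / 2 : ℕ) : ℝ) / 4 := by
          rw [Finset.sum_const, Finset.card_range, nsmul_eq_mul]; ring
  · intro k hk l hl hkl
    exact W_indep H hn (Finset.mem_range.mp hk) (Finset.mem_range.mp hl) hkl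

end Prob








noncomputable def θf (n : ℕ) : ℝ := ((n / 2 : ℕ) : ℝ) / 2 + Gap n / 2
noncomputable def Bset (n : ℕ) (hn : 0 < n) : Finset (Equiv.Perm (Fin n)) :=
  @Finset.filter _ (fun τ => θf n ≤ Xu n hn τ) (Classical.decPred _) Finset.univ
noncomputable def Aset (n : ℕ) (hn : 0 < n) : Finset (Equiv.Perm (Fin n)) :=
  @Finset.filter _ (fun σ => σ⁻¹ ∈ Bset n hn) (Classical.decPred _) Finset.univ


lemma Aset_mem {n : ℕ} (hn : 0 < n) (σ : Equiv.Perm (Fin n)) :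
    σ ∈ Aset n hn ↔ σ⁻¹ ∈ Bset n hn := by
  rw [Aset]
  simp [Finset.mem_filter]

section Prob2
variable {n : ℕ} {Ω : Type*} [MeasurableSpace Ω] {μ : Measure Ω} {Z : Fin n → Ω → ℝ}
  {ρ : Ω → Equiv.Perm (Fin n)}
lemma cheb (H : IsInverseUnfair μ Z ρ) (hn2 : 2 ≤ n) (hn : 0 < n) :
    μ {ω | SW Z hn ω < θf n} ≤ ENNReal.ofReal (((n / 2 : ℕ) : ℝ) / (Gap n)^2) := by
  haveI := H.prob
  have hG := Gap_pos hn2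
  have hmem : MemLp (SW Z hn) 2 μ := memLp_finset_sum' _ (fun k _ => W_memL2 H hn k)
  have hmean : μ[SW Z hn] = ((n / 2 : ℕ) : ℝ) / 2 + Gap n := by
    rw [SW_mean H hn, mean_eq]
  have hch := meas_ge_le_variance_div_sq (μ := μ) hmem
    (c := Gap n / 2) (by linarith)
  have hsub : {ω | SW Z hn ω < θf n}
      ⊆ {ω | Gap n / 2 ≤ |SW Z hn ω - μ[SW Z hn]|} := by
    intro ω hω
    simp only [Set.mem_setOf_eq, θf] at hω ⊢
    rw [hmean, abs_sub_comm, abs_of_nonneg (by linarith)]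
    linarith
  refine le_trans (le_trans (measure_mono hsub) hch) (ENNReal.ofReal_le_ofReal ?_)
  have hv := SW_variance H hn
  have hvar0 : 0 ≤ variance (SW Z hn) μ := variance_nonneg _ _
  have hq : (Gap n / 2)^2 = (Gap n)^2 / 4 := by ring
  rw [hq]
  rw [div_le_div_iff₀ (by positivity) (by positivity)]
  nlinarith [sq_nonneg (Gap n)]

lemma card_B_bound' (n : ℕ) (hn : 0 < n) (hn2 : 2 ≤ n) :
    ((Bset n hn).card : ℝ) ≤ (Nat.factorial n : ℝ) * ((n / 2 : ℕ) : ℝ) / (Gap n)^2 := by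
  classical
  have hG := Gap_pos hn2
  have h := card_B_bound n hn hG
  have hcards : (Bset n hn).card = (Finset.univ.filter (fun τ : Equiv.Perm (Fin n) =>
      ((n / 2 : ℕ) : ℝ) / 2 + Gap n / 2 ≤ Xu n hn τ)).card := by
    rw [Bset]
    congr 1
  rw [hcards]
  have h2 := (le_div_iff₀ (by positivity : (0:ℝ) < (Gap n / 2)^2)).mpr h
  refine le_trans h2 (le_of_eq ?_)
  rw [show (Gap n / 2)^2 = (Gap n)^2 / 4 by ring]
  field_simp

lemma inv_event_meas (H : IsInverseUnfair μ Z ρ) (σ : Equiv.Perm (Fin n)) :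
    MeasurableSet {ω | (ρ ω)⁻¹ = σ} := by
  have : {ω | (ρ ω)⁻¹ = σ} = {ω | ρ ω = σ⁻¹} := by
    ext ω; simp [inv_eq_iff_eq_inv]
  rw [this]; exact H.rhoMeas σ⁻¹

lemma sum_p_over (H : IsInverseUnfair μ Z ρ) (A : Finset (Equiv.Perm (Fin n))) :
    ∑ σ ∈ A, (μ {ω | (ρ ω)⁻¹ = σ}).toReal = (μ {ω | (ρ ω)⁻¹ ∈ A}).toReal := by
  haveI := H.prob
  have hUnion : {ω | (ρ ω)⁻¹ ∈ A} = ⋃ σ ∈ A, {ω | (ρ ω)⁻¹ = σ} := by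
    ext ω; simp
  rw [hUnion, measure_biUnion_finset ?hd (fun σ _ => inv_event_meas H σ)]
  · rw [ENNReal.toReal_sum (fun σ _ => measure_ne_top μ _)]
  case hd =>
    intro σ hσ σ' hσ' hne
    simp only [Function.onFun]
    rw [Set.disjoint_left]
    intro ω h1 h2
    exact hne (h1.symm.trans h2)

lemma sum_p_total (H : IsInverseUnfair μ Z ρ) :
    ∑ σ : Equiv.Perm (Fin n), (μ {ω | (ρ ω)⁻¹ = σ}).toReal = 1 := by
  haveI := H.prob
  rw [sum_p_over H Finset.univ]
  simp

lemma SW_meas (H : IsInverseUnfair μ Z ρ) (hn : 0 < n) : Measurable (SW Z hn) := by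
  have hrw : SW Z hn = fun ω => ∑ k ∈ Finset.range (n / 2), W Z hn k ω := by
    funext ω; rw [SW]; simp [Finset.sum_apply]
  rw [hrw]
  apply Finset.measurable_sum
  intro k _
  exact measurable_const.indicator (measurableSet_lt (H.meas _) (H.meas _))

lemma bridge (H : IsInverseUnfair μ Z ρ) (hn : 0 < n) :
    μ {ω | ρ ω ∈ Bset n hn} = μ {ω | θf n ≤ SW Z hn ω} := by
  apply measure_congr
  rw [Filter.eventuallyEq_set]
  filter_upwards [H.rank] with ω hω
  simp only [Set.mem_setOf_eq, Bset, Finset.mem_filter, Finset.mem_univ, true_and]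
  have hXu : Xu n hn (ρ ω) = SW Z hn ω := by
    rw [Xu, SW]
    simp only [Finset.sum_apply]
    apply Finset.sum_congr rfl
    intro k _
    rw [W, Set.indicator]
    by_cases hz : ω ∈ Ev Z hn k
    · rw [if_pos ((hω _ _).mpr hz), if_pos hz]
    · rw [if_neg (fun hc => hz ((hω _ _).mp hc)), if_neg hz]
  rw [hXu]

lemma prob_B_lower (H : IsInverseUnfair μ Z ρ) (hn2 : 2 ≤ n) (hn : 0 < n) :
    1 - ((n / 2 : ℕ) : ℝ) / (Gap n)^2 ≤ (μ {ω | ρ ω ∈ Bset n hn}).toReal := by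
  haveI := H.prob
  rw [bridge H hn]
  have hms : MeasurableSet {ω | θf n ≤ SW Z hn ω} :=
    measurableSet_le measurable_const (SW_meas H hn)
  have hcompl : {ω | θf n ≤ SW Z hn ω}ᶜ = {ω | SW Z hn ω < θf n} := by
    ext ω; simp [not_le]
  have hadd := prob_add_prob_compl (μ := μ) hms
  rw [hcompl] at hadd
  have h1 := cheb H hn2 hn
  have hy : (μ {ω | SW Z hn ω < θf n}).toReal ≤ ((n / 2 : ℕ) : ℝ) / (Gap n)^2 := by
    have := ENNReal.toReal_mono ENNReal.ofReal_ne_top h1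
    rwa [ENNReal.toReal_ofReal (by positivity)] at this
  have hxy : (μ {ω | θf n ≤ SW Z hn ω}).toReal
      + (μ {ω | SW Z hn ω < θf n}).toReal = 1 := by
    rw [← ENNReal.toReal_add (measure_ne_top μ _) (measure_ne_top μ _), hadd]
    simp
  linarith

lemma card_A_eq (n : ℕ) (hn : 0 < n) : (Aset n hn).card = (Bset n hn).card := by
  have himg : Aset n hn = Finset.image (fun τ => τ⁻¹) (Bset n hn) := by
    ext σ
    simp only [Aset, Finset.mem_filter, Finset.mem_univ, true_and, Finset.mem_image]
    constructor
    · intro hσ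
      exact ⟨σ⁻¹, hσ, inv_inv σ⟩
    · rintro ⟨τ, hτ, rfl⟩
      rwa [inv_inv]
  rw [himg, Finset.card_image_of_injective _ inv_injective]


end Prob2





section P
variable {n : ℕ} {Ω : Type*} [MeasurableSpace Ω] {μ : Measure Ω} {Z : Fin n → Ω → ℝ}
  {ρ : Ω → Equiv.Perm (Fin n)}

lemma ratio_bound {n : ℕ} (hn2 : 2 ≤ n) :
    2 * ((n / 2 : ℕ) : ℝ) / (Gap n)^2 ≤ 4096 / (n : ℝ) := by
  have hG := Gap_pos hn2
  have hN2 : (2:ℝ) ≤ (n:ℝ) := by exact_mod_cast hn2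
  have h2M : 2 * ((n / 2 : ℕ) : ℝ) ≤ (n:ℝ) := by exact_mod_cast (by omega : 2 * (n/2) ≤ n)
  have hMlb : (n:ℝ) - 1 ≤ 2 * ((n / 2 : ℕ) : ℝ) := by
    have h1 : ((n - 1 : ℕ) : ℝ) ≤ ((2 * (n/2) : ℕ) : ℝ) := Nat.cast_le.mpr (by omega)
    push_cast [Nat.cast_sub (by omega : 1 ≤ n)] at h1
    linarith
  set N : ℝ := (n : ℝ) with hN
  set M : ℝ := ((n / 2 : ℕ) : ℝ) with hM
  have hM0 : (0:ℝ) ≤ M := by positivity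
  have hN0 : (0:ℝ) < N := by linarith
  have hGlb : (N - 1)^2 / (16 * N) ≤ Gap n := by
    rw [Gap, div_le_div_iff₀ (by positivity) (by positivity)]
    have hNM : N - 1 ≤ 2 * (N - M) := by linarith
    nlinarith [mul_le_mul hMlb hNM (by linarith) (by linarith)]
  have hA : (N - 1)^2 ≤ Gap n * (16 * N) := (div_le_iff₀ (by positivity)).mp hGlb
  have hB : (N - 1)^4 ≤ 256 * N^2 * (Gap n)^2 := by
    nlinarith [hA, sq_nonneg (N - 1), hG.le, mul_self_le_mul_self (sq_nonneg (N-1)) hA]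
  have h16 : N^4 ≤ 16 * (N - 1)^4 := by
    have h1 : N ≤ 2 * (N - 1) := by linarith
    have := pow_le_pow_left₀ (by linarith : (0:ℝ) ≤ N) h1 4
    nlinarith [this]
  have hC : N^4 ≤ 4096 * N^2 * (Gap n)^2 := by nlinarith [h16, hB]
  have hD : N^2 ≤ 4096 * (Gap n)^2 := by
    by_contra hcon
    push_neg at hcon
    have hsq : (0:ℝ) < N^2 := by positivity
    nlinarith [hC, mul_lt_mul_of_pos_left hcon hsq]
  rw [div_le_div_iff₀ (by positivity) hN0]
  nlinarith [hD, h2M, hM0, hN0]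

lemma main_lower (H : IsInverseUnfair μ Z ρ) (hn2 : 2 ≤ n) :
    1 - 4096 / (n : ℝ) ≤ (1 / 2 : ℝ) * ∑ σ : Equiv.Perm (Fin n),
      |(μ {ω | (ρ ω)⁻¹ = σ}).toReal - 1 / (Nat.factorial n : ℝ)| := by
  classical
  haveI := H.prob
  have hn : 0 < n := by omega
  have hG := Gap_pos hn2
  set u : ℝ := 1 / (Nat.factorial n : ℝ) with hu
  set p : Equiv.Perm (Fin n) → ℝ := fun σ => (μ {ω | (ρ ω)⁻¹ = σ}).toReal with hp
  have hfac : (0:ℝ) < (Nat.factorial n : ℝ) := by exact_mod_cast Nat.factorial_pos n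
  have hu0 : 0 ≤ u := by positivity
  have hsump : ∑ σ : Equiv.Perm (Fin n), p σ = 1 := sum_p_total H
  have hsumu : ∑ _σ : Equiv.Perm (Fin n), u = 1 := by
    rw [Finset.sum_const, Finset.card_univ, Fintype.card_perm, Fintype.card_fin,
      nsmul_eq_mul, hu]
    field_simp
  -- the event set identity
  have hAB : {ω | (ρ ω)⁻¹ ∈ Aset n hn} = {ω | ρ ω ∈ Bset n hn} := by
    ext ω
    simp only [Set.mem_setOf_eq, Aset_mem, inv_inv]
  -- sum over A of p
  have hSA : ∑ σ ∈ Aset n hn, p σ = (μ {ω | ρ ω ∈ Bset n hn}).toReal := by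
    rw [hp, sum_p_over H, hAB]
  -- sum over A of u
  have hSAu : ∑ _σ ∈ Aset n hn, u ≤ ((n / 2 : ℕ) : ℝ) / (Gap n)^2 := by
    rw [Finset.sum_const, nsmul_eq_mul, card_A_eq n hn]
    have := card_B_bound' n hn hn2
    calc ((Bset n hn).card : ℝ) * u
        ≤ ((Nat.factorial n : ℝ) * ((n / 2 : ℕ) : ℝ) / (Gap n)^2) * u := by
          apply mul_le_mul_of_nonneg_right this hu0
      _ = ((n / 2 : ℕ) : ℝ) / (Gap n)^2 := by
          rw [hu]; field_simp
  -- key chain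
  have hkey : ∑ σ ∈ Aset n hn, (p σ - u)
      ≤ (1 / 2 : ℝ) * ∑ σ : Equiv.Perm (Fin n), |p σ - u| := by
    have hmax : ∀ σ : Equiv.Perm (Fin n), max (p σ - u) 0 = ((p σ - u) + |p σ - u|) / 2 := by
      intro σ
      rcases le_or_gt 0 (p σ - u) with h | h
      · rw [max_eq_left h, abs_of_nonneg h]; ring
      · rw [max_eq_right h.le, abs_of_neg h]; ring
    calc ∑ σ ∈ Aset n hn, (p σ - u)
        ≤ ∑ σ ∈ Aset n hn, max (p σ - u) 0 :=
          Finset.sum_le_sum (fun σ _ => le_max_left _ _)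
      _ ≤ ∑ σ : Equiv.Perm (Fin n), max (p σ - u) 0 :=
          Finset.sum_le_sum_of_subset_of_nonneg (Finset.subset_univ _)
            (fun σ _ _ => le_max_right _ _)
      _ = ((∑ σ : Equiv.Perm (Fin n), (p σ - u))
            + ∑ σ : Equiv.Perm (Fin n), |p σ - u|) / 2 := by
          rw [Finset.sum_congr rfl (fun σ _ => hmax σ), ← Finset.sum_div,
            Finset.sum_add_distrib]
      _ = (1 / 2 : ℝ) * ∑ σ : Equiv.Perm (Fin n), |p σ - u| := by
          rw [Finset.sum_sub_distrib, hsump, hsumu]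
          ring
  have hlow : 1 - 2 * ((n / 2 : ℕ) : ℝ) / (Gap n)^2 ≤ ∑ σ ∈ Aset n hn, (p σ - u) := by
    rw [Finset.sum_sub_distrib, hSA]
    have h1 := prob_B_lower H hn2 hn
    have h2 : ∑ _σ ∈ Aset n hn, u ≤ ((n / 2 : ℕ) : ℝ) / (Gap n)^2 := hSAu
    have : 2 * ((n / 2 : ℕ) : ℝ) / (Gap n)^2
        = ((n / 2 : ℕ) : ℝ) / (Gap n)^2 + ((n / 2 : ℕ) : ℝ) / (Gap n)^2 := by ring
    rw [this]
    linarith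
  have hr := ratio_bound hn2
  linarith

lemma main_upper (H : IsInverseUnfair μ Z ρ) :
    (1 / 2 : ℝ) * ∑ σ : Equiv.Perm (Fin n),
      |(μ {ω | (ρ ω)⁻¹ = σ}).toReal - 1 / (Nat.factorial n : ℝ)| ≤ 1 := by
  haveI := H.prob
  set u : ℝ := 1 / (Nat.factorial n : ℝ) with hu
  have hfac : (0:ℝ) < (Nat.factorial n : ℝ) := by exact_mod_cast Nat.factorial_pos n
  have hu0 : 0 ≤ u := by positivity
  have hsump : ∑ σ : Equiv.Perm (Fin n), (μ {ω | (ρ ω)⁻¹ = σ}).toReal = 1 := sum_p_total H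
  have hsumu : ∑ _σ : Equiv.Perm (Fin n), u = 1 := by
    rw [Finset.sum_const, Finset.card_univ, Fintype.card_perm, Fintype.card_fin,
      nsmul_eq_mul, hu]
    field_simp
  have habs : ∀ σ : Equiv.Perm (Fin n),
      |(μ {ω | (ρ ω)⁻¹ = σ}).toReal - u| ≤ (μ {ω | (ρ ω)⁻¹ = σ}).toReal + u := by
    intro σ
    have h0 : 0 ≤ (μ {ω | (ρ ω)⁻¹ = σ}).toReal := ENNReal.toReal_nonneg
    rcases abs_cases ((μ {ω | (ρ ω)⁻¹ = σ}).toReal - u) with ⟨he, _⟩ | ⟨he, _⟩ <;>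
      rw [he] <;> linarith
  have hsum := Finset.sum_le_sum (fun σ (_ : σ ∈ Finset.univ) => habs σ)
  rw [Finset.sum_add_distrib, hsump, hsumu] at hsum
  linarith
end P

end G3

/-- The total variation distance between the law of the unfair permutation
`γ_n = ρ_n⁻¹` and the uniform distribution on `S_n` converges to `1` as
`n → ∞`.  (Here `d_TV = (1/2) Σ_σ |P(γ_n = σ) - 1/n!|`.) -/
theorem stmt_8 (Ω : ℕ → Type*) [∀ n, MeasurableSpace (Ω n)]
    (μ : ∀ n, Measure (Ω n)) (Z : ∀ n, Fin n → Ω n → ℝ)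
    (ρ : ∀ n, Ω n → Equiv.Perm (Fin n))
    (h : ∀ n, IsInverseUnfair (μ n) (Z n) (ρ n)) :
    Tendsto (fun n => (1 / 2 : ℝ) * ∑ σ : Equiv.Perm (Fin n),
        |(μ n {ω | (ρ n ω)⁻¹ = σ}).toReal - 1 / (Nat.factorial n : ℝ)|)
      atTop (𝓝 1) := by
  have hlow : ∀ᶠ n : ℕ in atTop, 1 - 4096 / (n : ℝ)
      ≤ (1 / 2 : ℝ) * ∑ σ : Equiv.Perm (Fin n),
        |(μ n {ω | (ρ n ω)⁻¹ = σ}).toReal - 1 / (Nat.factorial n : ℝ)| := by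
    filter_upwards [eventually_ge_atTop 2] with n hn
    exact main_lower (h n) hn
  have hup : ∀ᶠ n : ℕ in atTop, (1 / 2 : ℝ) * ∑ σ : Equiv.Perm (Fin n),
      |(μ n {ω | (ρ n ω)⁻¹ = σ}).toReal - 1 / (Nat.factorial n : ℝ)| ≤ 1 :=
    Filter.Eventually.of_forall (fun n => main_upper (h n))
  have h1 : Tendsto (fun n : ℕ => 1 - 4096 / (n : ℝ)) atTop (𝓝 1) := by
    have h0 : Tendsto (fun n : ℕ => (4096 : ℝ) / (n : ℝ)) atTop (𝓝 0) :=
      tendsto_const_div_atTop_nhds_zero_nat 4096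
    have := tendsto_const_nhds (x := (1:ℝ)) (f := atTop (α := ℕ)) |>.sub h0
    simpa using this
  exact tendsto_of_tendsto_of_tendsto_of_le_of_le' h1 tendsto_const_nhds hlow hup
end

section
/- For 1 ≤ i and k ≥ 1 with i + k ≤ n, the probability that ρ_n(i) > ρ_n(i+k) equals i/(2i+k). -/
open MeasureTheory ProbabilityTheory Filter
open scoped ENNReal NNReal Topology

/-- The law of the max of `c` iid uniforms: density `c t^(c-1)` on `(0,1]`. -/
noncomputable def nuIU (c : ℕ) : Measure ℝ :=
  (volume.restrict (Set.Ioc (0:ℝ) 1)).withDensity fun t => ENNReal.ofReal (c * t ^ (c-1))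

lemma lint_pow_IU (m : ℕ) {t : ℝ} (ht : 0 ≤ t) :
    ∫⁻ x in Set.Ioc 0 t, ENNReal.ofReal (x ^ m) = ENNReal.ofReal (t ^ (m+1) / (m+1)) := by
  rw [← ofReal_integral_eq_lintegral_ofReal]
  · congr 1
    rw [← intervalIntegral.integral_of_le ht, integral_pow]
    simp
  · exact (continuous_pow m).integrableOn_Ioc
  · refine (ae_restrict_iff' measurableSet_Ioc).2 ?_
    filter_upwards with x hx
    exact pow_nonneg hx.1.le m

lemma lint_cpow_IU (c m : ℕ) {t : ℝ} (ht : 0 ≤ t) :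
    ∫⁻ x in Set.Ioc 0 t, ENNReal.ofReal (c * x ^ m) = ENNReal.ofReal (c * (t ^ (m+1) / (m+1))) := by
  have : ∀ x : ℝ, ENNReal.ofReal (c * x ^ m) = ENNReal.ofReal c * ENNReal.ofReal (x ^ m) :=
    fun x => ENNReal.ofReal_mul (by positivity)
  simp_rw [this]
  rw [lintegral_const_mul _ (by measurability), lint_pow_IU m ht,
    ← ENNReal.ofReal_mul (by positivity)]

lemma nuIU_apply (c : ℕ) {s : Set ℝ} (hs : MeasurableSet s) :
    nuIU c s = ∫⁻ t in s ∩ Set.Ioc 0 1, ENNReal.ofReal (c * t ^ (c-1)) := by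
  rw [nuIU, withDensity_apply _ hs, Measure.restrict_restrict hs]

lemma nuIU_Iic (c : ℕ) (hc : 1 ≤ c) {t : ℝ} (h0 : 0 ≤ t) (h1 : t ≤ 1) :
    nuIU c (Set.Iic t) = ENNReal.ofReal (t ^ c) := by
  rw [nuIU_apply c measurableSet_Iic]
  have hset : Set.Iic t ∩ Set.Ioc 0 1 = Set.Ioc 0 t := by
    ext x
    simp only [Set.mem_inter_iff, Set.mem_Iic, Set.mem_Ioc]
    constructor
    · rintro ⟨hx, hx0, _⟩; exact ⟨hx0, hx⟩
    · rintro ⟨hx0, hx⟩; exact ⟨hx, hx0, hx.trans h1⟩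
  rw [hset, lint_cpow_IU c (c-1) h0]
  have hc1 : c - 1 + 1 = c := by omega
  have hcr : ((c-1:ℕ):ℝ) + 1 = (c:ℝ) := by exact_mod_cast hc1
  rw [hc1, hcr]
  congr 1
  have hc0 : (c:ℝ) ≠ 0 := by positivity
  field_simp

instance nuIU_finite (c : ℕ) : IsFiniteMeasure (nuIU c) := by
  constructor
  rw [nuIU_apply c MeasurableSet.univ, Set.univ_inter, lint_cpow_IU c (c-1) zero_le_one]
  exact ENNReal.ofReal_lt_top

instance nuIU_prob (c : ℕ) [hc : Fact (1 ≤ c)] : IsProbabilityMeasure (nuIU c) := by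
  constructor
  have h1c := hc.out
  rw [nuIU_apply c MeasurableSet.univ, Set.univ_inter, lint_cpow_IU c (c-1) zero_le_one]
  have hc1 : c - 1 + 1 = c := by omega
  have hcr : ((c-1:ℕ):ℝ) + 1 = (c:ℝ) := by exact_mod_cast hc1
  have hc0 : (c:ℝ) ≠ 0 := by positivity
  rw [hc1, hcr, one_pow, show (c : ℝ) * (1 / c) = 1 by field_simp, ENNReal.ofReal_one]

lemma nuIU_singleton (c : ℕ) (y : ℝ) : nuIU c {y} = 0 := by
  refine (withDensity_absolutelyContinuous _ _) ?_
  refine le_antisymm ?_ zero_le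
  calc volume.restrict (Set.Ioc (0:ℝ) 1) {y} ≤ volume {y} := Measure.restrict_apply_le _ _
    _ = 0 := Real.volume_singleton

lemma nuIU_Iio (c : ℕ) (y : ℝ) : nuIU c (Set.Iio y) = nuIU c (Set.Iic y) := by
  refine le_antisymm (measure_mono Set.Iio_subset_Iic_self) ?_
  rw [← Set.Iio_union_right]
  exact (measure_union_le _ _).trans (by simp [nuIU_singleton])

lemma law_eq_nuIU {n : ℕ} {Ω : Type*} [MeasurableSpace Ω]
    {μ : Measure Ω} {Z : Fin n → Ω → ℝ} {ρ : Ω → Equiv.Perm (Fin n)}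
    (h : IsInverseUnfair μ Z ρ) (j : Fin n) :
    μ.map (Z j) = nuIU ((j : ℕ) + 1) := by
  haveI := h.prob
  haveI : Fact (1 ≤ (j : ℕ) + 1) := ⟨by omega⟩
  haveI : IsProbabilityMeasure (μ.map (Z j)) :=
    Measure.isProbabilityMeasure_map (h.meas j).aemeasurable
  refine Measure.ext_of_Iic _ _ fun t => ?_
  have hmap : ∀ s : ℝ, μ.map (Z j) (Set.Iic s) = μ {ω | Z j ω ≤ s} := fun s => by
    rw [Measure.map_apply (h.meas j) measurableSet_Iic]; rfl
  rcases le_or_gt t 0 with ht | ht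
  · rcases lt_or_eq_of_le ht with ht' | ht'
    · -- t < 0
      have h1 : μ.map (Z j) (Set.Iic t) ≤ μ.map (Z j) (Set.Iic 0) :=
        measure_mono (Set.Iic_subset_Iic.2 ht)
      rw [hmap 0, h.cdf j 0 ⟨le_refl 0, zero_le_one⟩] at h1
      simp only [zero_pow (Nat.succ_ne_zero _), ENNReal.ofReal_zero, le_zero_iff] at h1
      rw [h1, nuIU_apply _ measurableSet_Iic]
      have : Set.Iic t ∩ Set.Ioc (0:ℝ) 1 = ∅ := by
        ext x
        simp only [Set.mem_inter_iff, Set.mem_Iic, Set.mem_Ioc, Set.mem_empty_iff_false,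
          iff_false, not_and]
        intro hx hx0
        linarith
      rw [this]
      simp
    · subst ht'
      rw [hmap, h.cdf j 0 ⟨le_refl 0, zero_le_one⟩, nuIU_Iic _ (by omega) le_rfl zero_le_one]
  · rcases le_or_gt t 1 with ht1 | ht1
    · rw [hmap, h.cdf j t ⟨ht.le, ht1⟩, nuIU_Iic _ (by omega) ht.le ht1]
    · -- t > 1
      have h1 : (1:ℝ≥0∞) ≤ μ.map (Z j) (Set.Iic t) := by
        have := measure_mono (μ := μ.map (Z j)) (Set.Iic_subset_Iic.2 ht1.le)
        rwa [hmap 1, h.cdf j 1 ⟨zero_le_one, le_rfl⟩, one_pow, ENNReal.ofReal_one] at this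
      have h2 : μ.map (Z j) (Set.Iic t) ≤ 1 := prob_le_one
      have h3 : (1:ℝ≥0∞) ≤ nuIU ((j:ℕ)+1) (Set.Iic t) := by
        have := measure_mono (μ := nuIU ((j:ℕ)+1)) (Set.Iic_subset_Iic.2 ht1.le)
        rwa [nuIU_Iic _ (by omega) zero_le_one le_rfl, one_pow, ENNReal.ofReal_one] at this
      have h4 : nuIU ((j:ℕ)+1) (Set.Iic t) ≤ 1 := prob_le_one
      rw [le_antisymm h2 h1, le_antisymm h4 h3]

/-- For `1 ≤ i`, `1 ≤ k` with `i + k ≤ n`, the probability that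
`ρ_n(i) > ρ_n(i+k)` equals `i / (2i + k)` (players 1-indexed). -/
theorem stmt_12 {n : ℕ} {Ω : Type*} [MeasurableSpace Ω]
    (μ : Measure Ω) (Z : Fin n → Ω → ℝ) (ρ : Ω → Equiv.Perm (Fin n))
    (h : IsInverseUnfair μ Z ρ)
    (i k : ℕ) (hi : 1 ≤ i) (hk : 1 ≤ k) (hik : i + k ≤ n) :
    μ {ω | ρ ω ⟨i + k - 1, by omega⟩ < ρ ω ⟨i - 1, by omega⟩}
      = ENNReal.ofReal ((i : ℝ) / (2 * (i : ℝ) + (k : ℝ))) := by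
  haveI := h.prob
  set fa : Fin n := ⟨i + k - 1, by omega⟩ with hfa
  set fb : Fin n := ⟨i - 1, by omega⟩ with hfb
  have hA : (fa : ℕ) + 1 = i + k := by simp [hfa]; omega
  have hB : (fb : ℕ) + 1 = i := by simp [hfb]; omega
  have hne : fb ≠ fa := by
    intro hEq
    have := congrArg Fin.val hEq
    simp [hfa, hfb] at this
    omega
  -- Step 1: a.e. rewrite the event via the rank property
  have hsetae : {ω | ρ ω fa < ρ ω fb} =ᵐ[μ] {ω | Z fa ω < Z fb ω} := by
    filter_upwards [h.rank] with ω hω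
    simp only [Set.mem_setOf_eq, eq_iff_iff]
    exact hω fa fb
  rw [measure_congr hsetae]
  -- Step 2: express via the product of the laws
  have hpair : μ.map (fun ω => (Z fb ω, Z fa ω)) = (μ.map (Z fb)).prod (μ.map (Z fa)) :=
    (indepFun_iff_map_prod_eq_prod_map_map (h.meas fb).aemeasurable
      (h.meas fa).aemeasurable).mp (h.indep.indepFun hne)
  have hsmeas : MeasurableSet {p : ℝ × ℝ | p.2 < p.1} :=
    measurableSet_lt measurable_snd measurable_fst
  have hev : {ω | Z fa ω < Z fb ω} = (fun ω => (Z fb ω, Z fa ω)) ⁻¹' {p : ℝ × ℝ | p.2 < p.1} := rfl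
  rw [hev, ← Measure.map_apply ((h.meas fb).prodMk (h.meas fa)) hsmeas, hpair,
    law_eq_nuIU h fb, law_eq_nuIU h fa, hA, hB, Measure.prod_apply hsmeas]
  have hpre : ∀ y : ℝ, Prod.mk y ⁻¹' {p : ℝ × ℝ | p.2 < p.1} = Set.Iio y := by
    intro y; ext x; simp [Set.mem_Iio]
  simp_rw [hpre, nuIU_Iio]
  -- Step 3: compute the integral
  have hmono : Monotone (fun y : ℝ => nuIU (i+k) (Set.Iic y)) :=
    fun a b hab => measure_mono (Set.Iic_subset_Iic.2 hab)
  have hstep : ∫⁻ y, nuIU (i+k) (Set.Iic y) ∂(nuIU i)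
      = ∫⁻ y in Set.Ioc (0:ℝ) 1,
          (ENNReal.ofReal (i * y ^ (i-1)) * nuIU (i+k) (Set.Iic y)) ∂volume := by
    have hme : Measurable (fun t : ℝ => ENNReal.ofReal ((i:ℕ) * t ^ (i-1))) :=
      Measurable.ennreal_ofReal
        (measurable_const.mul (measurable_id.pow_const (i-1)))
    rw [show nuIU i = (volume.restrict (Set.Ioc (0:ℝ) 1)).withDensity
        (fun t => ENNReal.ofReal (i * t ^ (i-1))) from rfl,
      lintegral_withDensity_eq_lintegral_mul _ hme hmono.measurable]
    rfl
  rw [hstep]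
  have hcong : ∫⁻ y in Set.Ioc (0:ℝ) 1,
      (ENNReal.ofReal (i * y ^ (i-1)) * nuIU (i+k) (Set.Iic y)) ∂volume
      = ∫⁻ y in Set.Ioc (0:ℝ) 1, ENNReal.ofReal (i * y ^ (2*i+k-1)) ∂volume := by
    refine setLIntegral_congr_fun measurableSet_Ioc ?_
    intro y hy
    dsimp only
    rw [nuIU_Iic (i+k) (by omega) hy.1.le hy.2,
      ← ENNReal.ofReal_mul (mul_nonneg (Nat.cast_nonneg i) (pow_nonneg hy.1.le _))]
    congr 1
    rw [mul_assoc, ← pow_add]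
    congr 2
    omega
  rw [hcong, lint_cpow_IU i (2*i+k-1) zero_le_one]
  have h1 : ((2*i+k-1:ℕ):ℝ) + 1 = 2*(i:ℝ)+(k:ℝ) := by
    push_cast [Nat.cast_sub (by omega : 1 ≤ 2*i+k)]
    ring
  congr 1
  rw [one_pow, mul_one_div, h1]
end
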